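/- arXiv:1710.11328 — 7 statements merged into one kernel-verified Lean document; each statement's English description precedes it below -/
import Mathlib

section
/- For every integer n ≥ 2, the sum over k from 1 to n−1 of 1/sin²(πk/n) equals (n²−1)/3. -/
open Real Finset

-- sum of i and i^2 in ℂ
lemma sumC_id (n : ℕ) : ∑ i ∈ range n, (i:ℂ) = n*(n-1)/2 := by
  induction n with
  | zero => simp
  | succ m ih => rw [Finset.sum_range_succ, ih]; push_cast; ring

lemma sumC_sq (n : ℕ) : ∑ i ∈ range n, (i:ℂ)^2 = n*(n-1)*(2*n-1)/6 := by
  induction n with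
  | zero => simp
  | succ m ih => rw [Finset.sum_range_succ, ih]; push_cast; ring

lemma poly_id (z : ℂ) (n : ℕ) :
    (z - 1) * ∑ j ∈ range n, (j:ℂ) * z ^ j
      = ((n:ℂ) - 1) * z ^ n - (∑ j ∈ range n, z ^ j) + 1 := by
  induction n with
  | zero => simp
  | succ m ih =>
      rw [Finset.sum_range_succ, Finset.sum_range_succ, mul_add]
      rw [ih]; push_cast; ring

lemma geom_zero (n : ℕ) (z : ℂ) (hz : z ^ n = 1) (h1 : z ≠ 1) :
    ∑ j ∈ range n, z ^ j = 0 := by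
  have h := geom_sum_mul z n
  rw [hz, sub_self] at h
  have : z - 1 ≠ 0 := sub_ne_zero.mpr h1
  exact (mul_eq_zero.mp h).resolve_right this

lemma W_eq (n : ℕ) (z : ℂ) (hz : z ^ n = 1) (h1 : z ≠ 1) :
    (∑ j ∈ range n, (j:ℂ) * z ^ j) * (z - 1) = n := by
  have h := poly_id z n
  rw [hz, geom_zero n z hz h1] at h
  rw [mul_comm] at h; rw [h]; ring

lemma inv_one_sub (n : ℕ) (z : ℂ) (hn : (n:ℂ) ≠ 0) (hz : z ^ n = 1) (h1 : z ≠ 1) :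
    (1 - z)⁻¹ = -(∑ j ∈ range n, (j:ℂ) * z ^ j) / n := by
  have h1' : (1:ℂ) - z ≠ 0 := sub_ne_zero.mpr (Ne.symm h1)
  have h := W_eq n z hz h1
  field_simp
  linear_combination -h

lemma geom_Icc (n : ℕ) (hn : 1 ≤ n) (ω : ℂ) (hω : ω ^ n = 1) :
    ∑ k ∈ Icc 1 (n-1), ω ^ k = if ω = 1 then ((n:ℂ) - 1) else -1 := by
  have hr : range n = insert 0 (Icc 1 (n-1)) := by
    ext k
    simp only [Finset.mem_range, Finset.mem_insert, Finset.mem_Icc]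
    omega
  by_cases h : ω = 1
  · subst h
    simp [Nat.cast_sub hn]
  · have h0 := geom_zero n ω hω h
    rw [hr, Finset.sum_insert (by simp)] at h0
    simp only [pow_zero] at h0
    rw [if_neg h]
    linear_combination h0

theorem sum_inv_sin_sq (n : ℕ) (hn : 2 ≤ n) :
    ∑ k ∈ Finset.Icc 1 (n - 1), (1 : ℝ) / (Real.sin (π * k / n)) ^ 2
      = ((n : ℝ) ^ 2 - 1) / 3 := by
  have hn1 : 1 ≤ n := by omega
  have hnR : (n:ℝ) ≠ 0 := by positivity
  have hnC : (n:ℂ) ≠ 0 := by exact_mod_cast Nat.cast_ne_zero.mpr (by omega)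
  set c : ℂ := 2*(π:ℂ)*Complex.I/(n:ℂ) with hc
  have hnc : (n:ℂ) * c = 2*(π:ℂ)*Complex.I := by rw [hc]; field_simp
  have h2piI : (2*(π:ℂ)*Complex.I) ≠ 0 := by
    simp [Complex.I_ne_zero, Complex.ofReal_ne_zero, Real.pi_ne_zero]
  set u : ℕ → ℂ := fun k => Complex.exp ((k:ℂ) * c) with hu
  -- u k is an n-th root of unity
  have hun : ∀ k : ℕ, (u k) ^ n = 1 := by
    intro k
    rw [hu]
    rw [← Complex.exp_nat_mul]
    have : (n:ℂ) * ((k:ℂ)*c) = (k:ℤ) * (2*(π:ℂ)*Complex.I) := by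
      push_cast; rw [← hnc]; ring
    rw [this, Complex.exp_int_mul_two_pi_mul_I]
  have huinv : ∀ k : ℕ, ((u k)⁻¹) ^ n = 1 := by
    intro k; rw [inv_pow, hun, inv_one]
  -- u k ≠ 1 for k in the range
  have hu1 : ∀ k ∈ Icc 1 (n-1), u k ≠ 1 := by
    intro k hk h1
    rw [hu] at h1
    obtain ⟨m, hm⟩ := Complex.exp_eq_one_iff.mp h1
    have hm2 : (n:ℂ) * ((k:ℂ) * c) = (n:ℂ) * ((m:ℂ) * (2*(π:ℂ)*Complex.I)) := by rw [hm]
    have hm3 : (k:ℂ) * (2*(π:ℂ)*Complex.I) = ((m*n : ℤ):ℂ) * (2*(π:ℂ)*Complex.I) := by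
      push_cast
      calc (k:ℂ) * (2*(π:ℂ)*Complex.I) = (n:ℂ) * ((k:ℂ) * c) := by rw [← hnc]; ring
        _ = (m:ℂ)*(n:ℂ) * (2*(π:ℂ)*Complex.I) := by rw [hm2]; ring
    have hm4 : ((k:ℤ):ℂ) = ((m*n : ℤ):ℂ) := by
      have := mul_right_cancel₀ h2piI hm3
      exact_mod_cast this
    have hm5 : (k:ℤ) = m*n := by exact_mod_cast hm4
    simp only [Finset.mem_Icc] at hk
    have h1k : 1 ≤ k := hk.1
    have h2k : k ≤ n - 1 := hk.2
    have hkZ1 : (1:ℤ) ≤ (k:ℤ) := by exact_mod_cast h1k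
    have hkZ2 : (k:ℤ) < (n:ℤ) := by exact_mod_cast (show k < n by omega)
    have hnZ : (1:ℤ) ≤ (n:ℤ) := by exact_mod_cast hn1
    rcases le_or_gt m 0 with h | h
    · have : m * (n:ℤ) ≤ 0 := mul_nonpos_of_nonpos_of_nonneg h (by omega)
      omega
    · have h1m : (1:ℤ) ≤ m := h
      have : (n:ℤ) ≤ m * (n:ℤ) := le_mul_of_one_le_left (by omega) h1m
      omega
  have huinv1 : ∀ k ∈ Icc 1 (n-1), (u k)⁻¹ ≠ 1 := by
    intro k hk h1
    exact hu1 k hk (by rw [← inv_inv (u k), h1, inv_one])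
  have hune0 : ∀ k : ℕ, u k ≠ 0 := fun k => Complex.exp_ne_zero _
  -- step 1 : complexified term
  have key : ∀ k ∈ Icc 1 (n-1),
      (((1:ℝ) / (Real.sin (π * k / n)) ^ 2 : ℝ) : ℂ)
        = 4/(n:ℂ)^2 * ((∑ j ∈ range n, (j:ℂ)*(u k)^j) * (∑ i ∈ range n, (i:ℂ)*((u k)⁻¹)^i)) := by
    intro k hk
    have hk' := hk
    simp only [Finset.mem_Icc] at hk'
    have hk1 : 1 ≤ k := hk'.1
    have hkn : k < n := by omega
    have hu0 := hune0 k
    have hd1 : u k - 1 ≠ 0 := sub_ne_zero.mpr (hu1 k hk)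
    have hd2 : (u k)⁻¹ - 1 ≠ 0 := sub_ne_zero.mpr (huinv1 k hk)
    have huu : u k * (u k)⁻¹ = 1 := mul_inv_cancel₀ hu0
    -- real side
    have hsin : Real.sin (π * k / n) ^ 2 = (1 - Real.cos (2*π*k/n))/2 := by
      rw [Real.sin_sq_eq_half_sub]
      have h2 : 2 * (π * (k:ℝ) / n) = 2*π*k/n := by ring
      rw [h2]; ring
    have hspos : 0 < Real.sin (π * k / n) := by
      apply Real.sin_pos_of_pos_of_lt_pi
      · positivity
      · rw [div_lt_iff₀ (by positivity)]
        have : (k:ℝ) < n := by exact_mod_cast hkn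
        nlinarith [Real.pi_pos]
    have hcosne : (1:ℝ) - Real.cos (2*π*k/n) ≠ 0 := by
      have h2 : 0 < Real.sin (π * k / n) ^ 2 := pow_pos hspos 2
      rw [hsin] at h2
      intro h0; rw [h0] at h2; norm_num at h2
    have hreal : (1:ℝ) / (Real.sin (π * k / n)) ^ 2 = 2 / (1 - Real.cos (2*π*k/n)) := by
      rw [hsin, one_div, inv_div]
    -- complex cosine
    have hcosC : Complex.cos (2*(π:ℂ)*(k:ℂ)/(n:ℂ)) = (u k + (u k)⁻¹)/2 := by
      have h1 : (2*(π:ℂ)*(k:ℂ)/(n:ℂ)) * Complex.I = (k:ℂ) * c := by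
        rw [hc]; field_simp
      rw [Complex.cos, h1,
        show -(2*(π:ℂ)*(k:ℂ)/(n:ℂ)) * Complex.I = -((k:ℂ)*c) by linear_combination -h1]
      simp only [hu]
      rw [← Complex.exp_neg]
    have hW : (∑ j ∈ range n, (j:ℂ) * (u k) ^ j) * (u k - 1) = n :=
      W_eq n (u k) (hun k) (hu1 k hk)
    have hWi : (∑ i ∈ range n, (i:ℂ) * ((u k)⁻¹) ^ i) * ((u k)⁻¹ - 1) = n :=
      W_eq n ((u k)⁻¹) (huinv k) (huinv1 k hk)
    have hprod : (u k - 1) * ((u k)⁻¹ - 1) = 2 - (u k + (u k)⁻¹) := by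
      linear_combination huu
    have h2ne : (2:ℂ) - (u k + (u k)⁻¹) ≠ 0 := by
      rw [← hprod]; exact mul_ne_zero hd1 hd2
    have hden : (1:ℂ) - (u k + (u k)⁻¹)/2 ≠ 0 := by
      intro h0; apply h2ne; linear_combination 2*h0
    have hmain : (∑ j ∈ range n, (j:ℂ) * (u k) ^ j) * (∑ i ∈ range n, (i:ℂ) * ((u k)⁻¹) ^ i)
        * (2 - (u k + (u k)⁻¹)) = (n:ℂ)^2 := by
      rw [← hprod]
      calc (∑ j ∈ range n, (j:ℂ) * (u k) ^ j) * (∑ i ∈ range n, (i:ℂ) * ((u k)⁻¹) ^ i)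
            * ((u k - 1) * ((u k)⁻¹ - 1))
          = ((∑ j ∈ range n, (j:ℂ) * (u k) ^ j) * (u k - 1))
            * ((∑ i ∈ range n, (i:ℂ) * ((u k)⁻¹) ^ i) * ((u k)⁻¹ - 1)) := by ring
        _ = (n:ℂ) * (n:ℂ) := by rw [hW, hWi]
        _ = (n:ℂ)^2 := by ring
    rw [hreal]
    push_cast
    rw [hcosC]
    rw [div_eq_iff hden, div_mul_eq_mul_div, div_mul_eq_mul_div,
      eq_div_iff (pow_ne_zero 2 hnC)]
    linear_combination (-2:ℂ) * hmain
  -- inner geometric sums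
  have hω : ∀ j ∈ range n, ∀ i ∈ range n,
      ∑ k ∈ Icc 1 (n-1), (u k)^j * ((u k)⁻¹)^i
        = if i = j then ((n:ℂ)-1) else -1 := by
    intro j hj i hi
    have hjn : j < n := Finset.mem_range.mp hj
    have hin : i < n := Finset.mem_range.mp hi
    set ω : ℂ := Complex.exp (c * ((j:ℂ) - (i:ℂ))) with hωdef
    have hpow : ∀ k : ℕ, (u k)^j * ((u k)⁻¹)^i = ω ^ k := by
      intro k
      simp only [hu, hωdef]
      rw [← Complex.exp_neg, ← Complex.exp_nat_mul, ← Complex.exp_nat_mul, ← Complex.exp_add,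
        ← Complex.exp_nat_mul]
      congr 1
      ring
    have hωn : ω ^ n = 1 := by
      rw [hωdef, ← Complex.exp_nat_mul]
      have h3 : (n:ℂ) * (c * ((j:ℂ)-(i:ℂ))) = (((j - i : ℤ)):ℂ) * (2*(π:ℂ)*Complex.I) := by
        push_cast
        linear_combination ((j:ℂ)-(i:ℂ)) * hnc
      rw [h3, Complex.exp_int_mul_two_pi_mul_I]
    have hiff : ω = 1 ↔ i = j := by
      constructor
      · intro h1
        rw [hωdef] at h1
        obtain ⟨m, hm⟩ := Complex.exp_eq_one_iff.mp h1
        have h4 : (2*(π:ℂ)*Complex.I) * ((j:ℂ)-(i:ℂ))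
            = (2*(π:ℂ)*Complex.I) * ((m:ℂ)*(n:ℂ)) := by
          calc (2*(π:ℂ)*Complex.I) * ((j:ℂ)-(i:ℂ)) = (n:ℂ) * (c * ((j:ℂ)-(i:ℂ))) := by
                rw [← hnc]; ring
            _ = (n:ℂ) * ((m:ℂ) * (2*(π:ℂ)*Complex.I)) := by rw [hm]
            _ = (2*(π:ℂ)*Complex.I) * ((m:ℂ)*(n:ℂ)) := by ring
        have h5 : (j:ℂ) - (i:ℂ) = (m:ℂ)*(n:ℂ) := mul_left_cancel₀ h2piI h4
        have h6 : (j:ℤ) - (i:ℤ) = m * (n:ℤ) := by exact_mod_cast h5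
        have hnZ : (0:ℤ) < (n:ℤ) := by exact_mod_cast (by omega : 0 < n)
        have hjZ : (j:ℤ) < (n:ℤ) := by exact_mod_cast hjn
        have hiZ : (i:ℤ) < (n:ℤ) := by exact_mod_cast hin
        have hj0 : (0:ℤ) ≤ (j:ℤ) := Int.ofNat_nonneg j
        have hi0 : (0:ℤ) ≤ (i:ℤ) := Int.ofNat_nonneg i
        have hm0 : m = 0 := by
          rcases lt_trichotomy m 0 with h | h | h
          · exfalso
            have h1m : m ≤ -1 := by omega
            have : m * (n:ℤ) ≤ -1 * (n:ℤ) := mul_le_mul_of_nonneg_right h1m (le_of_lt hnZ)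
            linarith
          · exact h
          · exfalso
            have h1m : (1:ℤ) ≤ m := by omega
            have : 1 * (n:ℤ) ≤ m * (n:ℤ) := mul_le_mul_of_nonneg_right h1m (le_of_lt hnZ)
            linarith
        rw [hm0] at h6
        omega
      · intro h; subst h
        rw [hωdef]
        simp
    calc ∑ k ∈ Icc 1 (n-1), (u k)^j * ((u k)⁻¹)^i
        = ∑ k ∈ Icc 1 (n-1), ω ^ k := Finset.sum_congr rfl (fun k _ => hpow k)
      _ = if ω = 1 then ((n:ℂ)-1) else -1 := geom_Icc n hn1 ω hωn
      _ = if i = j then ((n:ℂ)-1) else -1 := by rw [if_congr hiff rfl rfl]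
  -- complex total
  have hC : ∑ k ∈ Icc 1 (n-1), (((1:ℝ)/(Real.sin (π * k / n))^2 : ℝ):ℂ) = ((n:ℂ)^2 - 1)/3 := by
    rw [Finset.sum_congr rfl key, ← Finset.mul_sum]
    have hexp : ∀ k ∈ Icc 1 (n-1),
        (∑ j ∈ range n, (j:ℂ)*(u k)^j) * (∑ i ∈ range n, (i:ℂ)*((u k)⁻¹)^i)
          = ∑ j ∈ range n, ∑ i ∈ range n, ((j:ℂ)*(i:ℂ)) * ((u k)^j * ((u k)⁻¹)^i) := by
      intro k _
      rw [Finset.sum_mul_sum]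
      exact Finset.sum_congr rfl (fun j _ => Finset.sum_congr rfl (fun i _ => by ring))
    rw [Finset.sum_congr rfl hexp, Finset.sum_comm]
    have hswap : ∀ j ∈ range n,
        ∑ k ∈ Icc 1 (n-1), ∑ i ∈ range n, ((j:ℂ)*(i:ℂ)) * ((u k)^j * ((u k)⁻¹)^i)
          = ∑ i ∈ range n, ((j:ℂ)*(i:ℂ)) * (if i = j then ((n:ℂ)-1) else -1) := by
      intro j hj
      rw [Finset.sum_comm]
      refine Finset.sum_congr rfl (fun i hi => ?_)
      rw [← Finset.mul_sum, hω j hj i hi]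
    rw [Finset.sum_congr rfl hswap]
    have hrow : ∀ j ∈ range n,
        ∑ i ∈ range n, ((j:ℂ)*(i:ℂ)) * (if i = j then ((n:ℂ)-1) else -1)
          = (n:ℂ)*(j:ℂ)^2 - (j:ℂ) * ∑ i ∈ range n, (i:ℂ) := by
      intro j hj
      have hsplit : ∀ i : ℕ, ((j:ℂ)*(i:ℂ)) * (if i = j then ((n:ℂ)-1) else -1)
          = (if i = j then ((i:ℂ)*(j:ℂ)*(n:ℂ)) else 0) - (j:ℂ)*(i:ℂ) := by
        intro i
        by_cases h : i = j
        · subst h; rw [if_pos rfl, if_pos rfl]; ring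
        · simp only [if_neg h]; ring
      calc ∑ i ∈ range n, ((j:ℂ)*(i:ℂ)) * (if i = j then ((n:ℂ)-1) else -1)
          = ∑ i ∈ range n, ((if i = j then ((i:ℂ)*(j:ℂ)*(n:ℂ)) else 0) - (j:ℂ)*(i:ℂ)) :=
            Finset.sum_congr rfl (fun i _ => hsplit i)
        _ = (∑ i ∈ range n, if i = j then ((i:ℂ)*(j:ℂ)*(n:ℂ)) else 0)
            - ∑ i ∈ range n, (j:ℂ)*(i:ℂ) := Finset.sum_sub_distrib _ _
        _ = (j:ℂ)*(j:ℂ)*(n:ℂ) - (j:ℂ) * ∑ i ∈ range n, (i:ℂ) := by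
            rw [Finset.sum_ite_eq' (range n) j (fun i => (i:ℂ)*(j:ℂ)*(n:ℂ)), if_pos hj,
              ← Finset.mul_sum]
        _ = (n:ℂ)*(j:ℂ)^2 - (j:ℂ) * ∑ i ∈ range n, (i:ℂ) := by ring
    rw [Finset.sum_congr rfl hrow, Finset.sum_sub_distrib, ← Finset.mul_sum, ← Finset.sum_mul,
      sumC_id, sumC_sq]
    field_simp
    ring
  -- conclude over ℝ
  have hfin : ((∑ k ∈ Finset.Icc 1 (n - 1), (1 : ℝ) / (Real.sin (π * k / n)) ^ 2 : ℝ) : ℂ)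
      = ((((n : ℝ) ^ 2 - 1) / 3 : ℝ) : ℂ) := by
    rw [Complex.ofReal_sum, hC]
    push_cast
    ring
  exact Complex.ofReal_injective hfin
end

section
/- For every integer n ≥ 2, the sum over k from 1 to n−1 of 1/sin⁴(πk/n) equals (n²−1)(n²+11)/45. -/
open Real Complex Finset Polynomial


lemma esymm_cons (a : ℂ) (M : Multiset ℂ) (r : ℕ) :
    (a ::ₘ M).esymm (r + 1) = M.esymm (r + 1) + a * M.esymm r := by
  simp only [Multiset.esymm, Multiset.powersetCard_cons, Multiset.map_add, Multiset.sum_add,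
    Multiset.map_map, Function.comp_def, Multiset.prod_cons]
  rw [Multiset.sum_map_mul_left]

lemma newton4 (M : Multiset ℂ) :
    M.sum = M.esymm 1 ∧
    (M.map (· ^ 2)).sum = M.esymm 1 * M.sum - 2 * M.esymm 2 ∧
    (M.map (· ^ 3)).sum = M.esymm 1 * (M.map (· ^ 2)).sum - M.esymm 2 * M.sum
      + 3 * M.esymm 3 ∧
    (M.map (· ^ 4)).sum = M.esymm 1 * (M.map (· ^ 3)).sum - M.esymm 2 * (M.map (· ^ 2)).sum
      + M.esymm 3 * M.sum - 4 * M.esymm 4 := by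
  induction M using Multiset.induction with
  | empty => simp [Multiset.esymm, Multiset.powersetCard_eq_empty _ (show Multiset.card (0:Multiset ℂ) < 1 by simp), Multiset.powersetCard_eq_empty _ (show Multiset.card (0:Multiset ℂ) < 2 by simp), Multiset.powersetCard_eq_empty _ (show Multiset.card (0:Multiset ℂ) < 3 by simp), Multiset.powersetCard_eq_empty _ (show Multiset.card (0:Multiset ℂ) < 4 by simp)]
  | cons a M IH =>
    obtain ⟨h1, h2, h3, h4⟩ := IH
    have e1 := esymm_cons a M 0
    have e2 := esymm_cons a M 1
    have e3 := esymm_cons a M 2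
    have e4 := esymm_cons a M 3
    have h0 : M.esymm 0 = 1 := by simp [Multiset.esymm]
    rw [h0] at e1
    simp only [Multiset.map_cons, Multiset.sum_cons] at *
    norm_num at e1 e2 e3 e4
    refine ⟨?_, ?_, ?_, ?_⟩
    · rw [e1]; linear_combination h1
    · rw [e1, e2]; linear_combination h2 - a * h1
    · rw [e1, e2, e3]; linear_combination h3 - a * h2
    · rw [e1, e2, e3, e4]; linear_combination h4 - a * h3



lemma cast_desc (n : ℕ) : ∀ r : ℕ, r ≤ n →
    ((n.descFactorial r : ℕ) : ℂ) = ∏ i ∈ range r, ((n : ℂ) - i) := by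
  intro r
  induction r with
  | zero => simp
  | succ m IH =>
    intro h
    rw [Nat.descFactorial_succ, Finset.prod_range_succ, Nat.cast_mul,
      IH (by omega), Nat.cast_sub (by omega)]
    ring

lemma cast_choose_mul (n r : ℕ) (hn : 2 ≤ n) (hr : r ≤ 5) :
    ((n.choose r : ℕ) : ℂ) * (r.factorial : ℂ) = ∏ i ∈ range r, ((n : ℂ) - i) := by
  rcases le_or_gt r n with h | h
  · rw [← cast_desc n r h, Nat.descFactorial_eq_factorial_mul_choose, Nat.cast_mul]
    ring
  · have h5 : n < 5 := by omega
    interval_cases n <;> interval_cases r <;> norm_num [Nat.choose]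


set_option maxHeartbeats 2000000 in
theorem sum_inv_sin_pow_four (n : ℕ) (hn : 2 ≤ n) :
    ∑ k ∈ Finset.Icc 1 (n - 1), (1 : ℝ) / (Real.sin (π * k / n)) ^ 4
      = ((n : ℝ) ^ 2 - 1) * ((n : ℝ) ^ 2 + 11) / 45 := by
  have hn0 : (n : ℂ) ≠ 0 := Nat.cast_ne_zero.mpr (by omega)
  have hnpos : 0 < n := by omega
  set ζ : ℂ := Complex.exp (2 * Real.pi * Complex.I / n) with hζ
  have hprim : IsPrimitiveRoot ζ n := Complex.isPrimitiveRoot_exp n (by omega)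
  -- product over all n-th roots
  have hall : (X ^ n - 1 : ℂ[X]) = ∏ k ∈ range n, (X - C (ζ ^ k)) := by
    have h1 : (X ^ n - 1 : ℂ[X]).roots = (Multiset.range n).map (ζ ^ ·) := by
      have := hprim.nthRoots_eq (α := (1:ℂ)) (a := (1:ℂ)) (one_pow n)
      simpa [Polynomial.nthRoots, mul_one] using this
    have hmonic : (X ^ n - 1 : ℂ[X]).Monic := by
      simpa using monic_X_pow_sub_C (1 : ℂ) (by omega)
    have hdeg : (X ^ n - 1 : ℂ[X]).natDegree = n := by
      simpa using natDegree_X_pow_sub_C (n := n) (r := (1:ℂ))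
    have := prod_multiset_X_sub_C_of_monic_of_roots_card_eq hmonic
      (by rw [h1, hdeg]; simp)
    rw [← this, h1]
    simp [Finset.prod, Multiset.map_map, Function.comp_def]
  -- the key polynomial identity
  have hPQ : (∏ k ∈ Icc 1 (n-1), (X - C (ζ ^ k)) : ℂ[X]) = ∑ j ∈ range n, (X:ℂ[X]) ^ j := by
    apply mul_right_cancel₀ (b := (X - 1 : ℂ[X])) (X_sub_C_ne_zero 1)
    rw [geom_sum_mul, hall]
    have hins : range n = insert 0 (Icc 1 (n-1)) := by
      ext k; simp [Finset.mem_insert, Finset.mem_Icc, Finset.mem_range]; omega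
    rw [hins, Finset.prod_insert (by simp)]
    simp [mul_comm]
  set s : Finset ℕ := Icc 1 (n-1) with hs
  set A : ℕ → ℂ := fun k => (1 - ζ ^ k)⁻¹ with hA
  have hcard : s.card = n - 1 := by rw [hs, Nat.card_Icc]; omega
  have hBne : ∀ k ∈ s, 1 - ζ ^ k ≠ 0 := by
    intro k hk
    rw [hs, mem_Icc] at hk
    have : ζ ^ k ≠ 1 := hprim.pow_ne_one_of_pos_of_lt (by omega) (by omega)
    intro h; apply this; linear_combination -h
  have hprodB : ∏ k ∈ s, (1 - ζ ^ k) = (n : ℂ) := by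
    have := congrArg (eval 1) hPQ
    simpa [eval_prod] using this
  have hRS : (C (n:ℂ)) * ∏ k ∈ s, (X + C (A k))
      = ∑ j ∈ range n, (X:ℂ[X]) ^ (n-1-j) * (1 + X) ^ j := by
    apply Polynomial.eq_of_infinite_eval_eq
    apply Set.Infinite.mono (s := {x : ℂ | x ≠ 0})
    swap
    · exact Set.Finite.infinite_compl (Set.finite_singleton 0)
    intro x hx
    simp only [Set.mem_setOf_eq] at hx ⊢
    have hPQx := congrArg (eval ((1+x)/x)) hPQ
    simp only [eval_prod, eval_finset_sum, eval_sub, eval_X, eval_C, eval_pow] at hPQx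
    simp only [eval_mul, eval_prod, eval_finset_sum, eval_add, eval_X, eval_C, eval_pow,
      eval_one, eval_mul]
    have key1 : ∀ k ∈ s, x + A k = A k * (1 + x * (1 - ζ ^ k)) := by
      intro k hk
      have := hBne k hk
      field_simp [hA]
      have hAk : A k * (1 - ζ ^ k) = 1 := by simp only [hA]; exact inv_mul_cancel₀ this
      linear_combination (-x) * hAk
    rw [Finset.prod_congr rfl key1, Finset.prod_mul_distrib]
    have hprodA : ∏ k ∈ s, A k = ((n:ℂ))⁻¹ := by
      simp only [hA]
      rw [← hprodB]
      exact Finset.prod_inv_distrib _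
    have key2 : ∀ k ∈ s, 1 + x * (1 - ζ ^ k) = x * ((1+x)/x - ζ ^ k) := by
      intro k hk; field_simp; ring
    rw [Finset.prod_congr rfl key2, Finset.prod_mul_distrib, Finset.prod_const, hcard, hPQx,
      hprodA, ← mul_assoc, mul_inv_cancel₀ hn0, one_mul, Finset.mul_sum]
    refine Finset.sum_congr rfl ?_
    intro j hj
    rw [mem_range] at hj
    have hxj : x ^ (n-1) = x ^ (n-1-j) * x ^ j := by rw [← pow_add]; congr 1; omega
    rw [div_pow, hxj]
    field_simp
  -- elementary symmetric values
  set M : Multiset ℂ := s.val.map A with hM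
  have he : ∀ r : ℕ, 1 ≤ r → M.esymm r = ((n.choose (r+1) : ℕ) : ℂ) / n := by
    intro r hr
    rcases le_or_gt r (n-1) with h1 | h1
    · have hco := congrArg (fun p => coeff p (n-1-r)) hRS
      simp only [coeff_C_mul] at hco
      have hle : n-1-r ≤ s.card := by omega
      rw [Finset.prod_X_add_C_coeff s A hle] at hco
      rw [hcard] at hco
      have hrr : n - 1 - (n - 1 - r) = r := by omega
      rw [hrr] at hco
      rw [finset_sum_coeff] at hco
      have hterm : ∀ j ∈ range n,
          ((X:ℂ[X]) ^ (n-1-j) * (1 + X) ^ j).coeff (n-1-r) = (j.choose r : ℂ) := by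
        intro j hj
        rw [mem_range] at hj
        rw [mul_comm, coeff_mul_X_pow']
        rcases le_or_gt r j with h2 | h2
        · have hcond : n-1-j ≤ n-1-r := by omega
          rw [if_pos hcond, coeff_one_add_X_pow]
          have : n-1-r - (n-1-j) = j - r := by omega
          rw [this, Nat.choose_symm h2]
        · have hcond : ¬ (n-1-j ≤ n-1-r) := by omega
          rw [if_neg hcond, Nat.choose_eq_zero_of_lt h2, Nat.cast_zero]
      rw [Finset.sum_congr rfl hterm] at hco
      have hsum : ∑ j ∈ range n, (j.choose r : ℂ) = (n.choose (r+1) : ℂ) := by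
        rw [← Nat.cast_sum]
        congr 1
        have : ∑ j ∈ range n, j.choose r = ∑ j ∈ Icc r (n-1), j.choose r := by
          refine (Finset.sum_subset ?_ ?_).symm
          · intro k hk; rw [mem_Icc] at hk; rw [mem_range]; omega
          · intro k hk hk2
            rw [mem_range] at hk; rw [mem_Icc] at hk2
            exact Nat.choose_eq_zero_of_lt (by omega)
        rw [this, Nat.sum_Icc_choose]
        congr 1
        omega
      rw [hsum] at hco
      rw [eq_div_iff hn0, Finset.esymm_map_val]
      rw [← hco, mul_comm]
    · have hz : M.esymm r = 0 := by
        rw [Multiset.esymm]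
        have : Multiset.card M < r := by
          rw [hM, Multiset.card_map]
          have : Multiset.card s.val = s.card := rfl
          omega
        rw [Multiset.powersetCard_eq_empty _ this]
        simp
      rw [hz, Nat.choose_eq_zero_of_lt (by omega), Nat.cast_zero, zero_div]
  -- power sums via Newton
  obtain ⟨h1, h2, h3, h4⟩ := newton4 M
  have hM1 : M.sum = ∑ k ∈ s, A k := rfl
  have hMm : ∀ m : ℕ, (M.map (· ^ m)).sum = ∑ k ∈ s, (A k) ^ m := by
    intro m
    rw [hM, Multiset.map_map]
    rfl
  rw [hM1, hMm 2] at h2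
  rw [hM1, hMm 2, hMm 3] at h3
  rw [hM1, hMm 2, hMm 3, hMm 4] at h4
  rw [hM1] at h1
  -- per-term trig identity
  have hterm : ∀ k ∈ s, ((1 / Real.sin (Real.pi * k / n) ^ 4 : ℝ) : ℂ)
      = 16 * ((A k) ^ 2 - A k) ^ 2 := by
    intro k hks
    rw [hs, mem_Icc] at hks
    set c : ℂ := ζ ^ k with hc
    have hc1 : c ≠ 1 := hprim.pow_ne_one_of_pos_of_lt (by omega) (by omega)
    have h1c : 1 - c ≠ 0 := by intro h; apply hc1; linear_combination -h
    set z : ℂ := ((Real.pi * k / n : ℝ) : ℂ) with hz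
    set u : ℂ := Complex.exp (z * Complex.I) with hu
    have hu0 : u ≠ 0 := Complex.exp_ne_zero _
    have hu2 : u ^ 2 = c := by
      rw [hu, ← Complex.exp_nat_mul, hc, hζ, ← Complex.exp_nat_mul]
      congr 1
      rw [hz]
      push_cast
      field_simp
    have hc0 : c ≠ 0 := by rw [← hu2]; exact pow_ne_zero _ hu0
    have hsin2 : ((Real.sin (Real.pi * k / n) : ℝ) : ℂ) ^ 2 = (2 - c - c⁻¹) / 4 := by
      rw [Complex.ofReal_sin, ← hz, Complex.sin, neg_mul, Complex.exp_neg, ← hu, ← hu2]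
      rw [div_pow, mul_pow, Complex.I_sq]
      field_simp
      ring
    rw [Complex.ofReal_div, Complex.ofReal_one, Complex.ofReal_pow]
    rw [show (4:ℕ) = 2 * 2 from rfl, pow_mul, hsin2]
    have h2c : 2 - c - c⁻¹ ≠ 0 := by
      intro h
      have h2 : (1 - c) ^ 2 = (2 - c - c⁻¹) * (-c) := by
        field_simp
        ring
      rw [h, zero_mul] at h2
      exact h1c (pow_eq_zero_iff two_ne_zero |>.mp h2)
    have hAk : A k = (1 - c)⁻¹ := by rw [hA]
    rw [hAk]
    clear_value c z u
    have hA2 : ((1-c)⁻¹) ^ 2 - (1-c)⁻¹ = c / (1-c) ^ 2 := by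
      field_simp
      ring
    have hB2 : 2 - c - c⁻¹ = -(1-c) ^ 2 / c := by
      field_simp
      ring
    rw [hA2, hB2]
    field_simp
    ring
  -- cast the goal to ℂ
  rw [← Complex.ofReal_inj]
  rw [Complex.ofReal_sum]
  rw [Finset.sum_congr rfl hterm]
  have hsplit : ∑ k ∈ s, (16 : ℂ) * ((A k) ^ 2 - A k) ^ 2
      = 16 * ((∑ k ∈ s, (A k) ^ 4) - 2 * (∑ k ∈ s, (A k) ^ 3) + (∑ k ∈ s, (A k) ^ 2)) := by
    rw [← Finset.mul_sum]
    congr 1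
    have : ∀ k ∈ s, ((A k) ^ 2 - A k) ^ 2 = (A k ^ 4 - 2 * A k ^ 3) + A k ^ 2 := by
      intro k hk; ring
    rw [Finset.sum_congr rfl this, Finset.sum_add_distrib, Finset.sum_sub_distrib,
      ← Finset.mul_sum]
  rw [hsplit]
  -- plug in the values
  have he1 : M.esymm 1 = ((n.choose 2 : ℕ) : ℂ) / n := he 1 (by norm_num)
  have he2 : M.esymm 2 = ((n.choose 3 : ℕ) : ℂ) / n := he 2 (by norm_num)
  have he3 : M.esymm 3 = ((n.choose 4 : ℕ) : ℂ) / n := he 3 (by norm_num)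
  have he4 : M.esymm 4 = ((n.choose 5 : ℕ) : ℂ) / n := he 4 (by norm_num)
  simp only [he1, he2, he3, he4] at h1 h2 h3 h4
  have K2 : ((n.choose 2 : ℕ) : ℂ) * 2 = (n:ℂ) * ((n:ℂ) - 1) := by
    have := cast_choose_mul n 2 hn (by norm_num)
    simp [Finset.prod_range_succ, Nat.factorial] at this
    push_cast at this ⊢
    linear_combination this
  have K3 : ((n.choose 3 : ℕ) : ℂ) * 6 = (n:ℂ) * ((n:ℂ) - 1) * ((n:ℂ) - 2) := by
    have := cast_choose_mul n 3 hn (by norm_num)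
    simp [Finset.prod_range_succ, Nat.factorial] at this
    push_cast at this ⊢
    linear_combination this
  have K4 : ((n.choose 4 : ℕ) : ℂ) * 24 = (n:ℂ) * ((n:ℂ) - 1) * ((n:ℂ) - 2) * ((n:ℂ) - 3) := by
    have := cast_choose_mul n 4 hn (by norm_num)
    simp [Finset.prod_range_succ, Nat.factorial] at this
    push_cast at this ⊢
    linear_combination this
  have K5 : ((n.choose 5 : ℕ) : ℂ) * 120
      = (n:ℂ) * ((n:ℂ) - 1) * ((n:ℂ) - 2) * ((n:ℂ) - 3) * ((n:ℂ) - 4) := by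
    have := cast_choose_mul n 5 hn (by norm_num)
    simp [Finset.prod_range_succ, Nat.factorial] at this
    push_cast at this ⊢
    linear_combination this
  have hE1 : ((n.choose 2 : ℕ) : ℂ) / n = ((n:ℂ) - 1) / 2 := by
    rw [div_eq_div_iff hn0 (by norm_num : (2:ℂ) ≠ 0)]
    linear_combination K2
  have hE2 : ((n.choose 3 : ℕ) : ℂ) / n = ((n:ℂ) - 1) * ((n:ℂ) - 2) / 6 := by
    rw [div_eq_div_iff hn0 (by norm_num : (6:ℂ) ≠ 0)]
    linear_combination K3
  have hE3 : ((n.choose 4 : ℕ) : ℂ) / n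
      = ((n:ℂ) - 1) * ((n:ℂ) - 2) * ((n:ℂ) - 3) / 24 := by
    rw [div_eq_div_iff hn0 (by norm_num : (24:ℂ) ≠ 0)]
    linear_combination K4
  have hE4 : ((n.choose 5 : ℕ) : ℂ) / n
      = ((n:ℂ) - 1) * ((n:ℂ) - 2) * ((n:ℂ) - 3) * ((n:ℂ) - 4) / 120 := by
    rw [div_eq_div_iff hn0 (by norm_num : (120:ℂ) ≠ 0)]
    linear_combination K5
  rw [hE1] at h1 h2 h3 h4
  rw [hE2] at h2 h3 h4
  rw [hE3] at h3 h4
  rw [hE4] at h4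
  rw [h4, h3, h2, h1]
  push_cast
  field_simp
  ring
end

section
/- For every integer n ≥ 2 and integer m with 1 ≤ m ≤ n−1, the sum over k from 1 to n−1 of sin²(mπk/n)/sin²(πk/n) equals m(n−m). -/
open Real

namespace SumSinAux

open Complex Finset

lemma dirichlet (θ : ℝ) (hθ : Real.sin θ ≠ 0) (m : ℕ) :
    (Complex.sin ((m:ℂ)*θ)) = Complex.sin θ *
      (Complex.exp (-((m:ℂ)-1)*θ*Complex.I) *
        ∑ j ∈ Finset.range m, Complex.exp (2*θ*Complex.I) ^ j) := by
  have h1 : Complex.exp (2*θ*Complex.I) ≠ 1 := by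
    intro h
    rw [Complex.exp_eq_one_iff] at h
    obtain ⟨k, hk⟩ := h
    have h2 : (θ:ℂ) = k * Real.pi := by
      linear_combination (-Complex.I/2) * hk + ((θ:ℂ) - (k:ℂ)*(Real.pi:ℂ)) * Complex.I_sq
    have : θ = k * Real.pi := by exact_mod_cast h2
    exact hθ (by rw [this]; simp [Real.sin_int_mul_pi k])
  rw [geom_sum_eq h1]
  have h2 : Complex.exp (2*θ*Complex.I) - 1 ≠ 0 := sub_ne_zero.mpr h1
  have hne : Complex.exp ((θ:ℂ)*Complex.I) ≠ 0 := Complex.exp_ne_zero _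
  have e2 : Complex.exp (2*(θ:ℂ)*Complex.I) = Complex.exp ((θ:ℂ)*Complex.I)^2 := by
    rw [← Complex.exp_nat_mul]; norm_num; ring_nf
  have emm : Complex.exp (-((m:ℂ)-1)*(θ:ℂ)*Complex.I)
      = Complex.exp ((θ:ℂ)*Complex.I) * (Complex.exp ((θ:ℂ)*Complex.I)^m)⁻¹ := by
    rw [← Complex.exp_nat_mul, ← Complex.exp_neg, ← Complex.exp_add]; congr 1; ring
  have sm : Complex.sin ((m:ℂ)*(θ:ℂ))
      = ((Complex.exp ((θ:ℂ)*Complex.I)^m)⁻¹ - Complex.exp ((θ:ℂ)*Complex.I)^m) * Complex.I / 2 := by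
    rw [Complex.sin, ← Complex.exp_nat_mul, ← Complex.exp_neg]; ring_nf
  have s1 : Complex.sin ((θ:ℂ))
      = ((Complex.exp ((θ:ℂ)*Complex.I))⁻¹ - Complex.exp ((θ:ℂ)*Complex.I)) * Complex.I / 2 := by
    rw [Complex.sin, ← Complex.exp_neg]; ring_nf
  rw [sm, s1, emm]
  rw [e2] at h2 ⊢
  field_simp
  ring

lemma rootsum (n : ℕ) (hn : 2 ≤ n) (r : ℤ) (hr' : ¬ (n:ℤ) ∣ r) :
    ∑ k ∈ Finset.Icc 1 (n-1), (Complex.exp (2*Real.pi*Complex.I/n) ^ r) ^ k = -1 := by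
  have hn0 : (n:ℕ) ≠ 0 := by omega
  have hprim := Complex.isPrimitiveRoot_exp n hn0
  set ζ := Complex.exp (2*Real.pi*Complex.I/n) with hζ
  have hne1 : ζ ^ r ≠ 1 := fun h => hr' ((hprim.zpow_eq_one_iff_dvd r).mp h)
  have hpow : (ζ ^ r) ^ n = 1 := by
    rw [← zpow_natCast, ← zpow_mul, mul_comm, zpow_mul, zpow_natCast, hprim.pow_eq_one, one_zpow]
  have hins : Finset.range n = insert 0 (Finset.Icc 1 (n-1)) := by
    ext x; simp [Finset.mem_Icc, Finset.mem_range]; omega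
  have hrange : ∑ k ∈ Finset.range n, (ζ ^ r) ^ k = 0 := by
    rw [geom_sum_eq hne1, hpow]; simp
  rw [hins, Finset.sum_insert (by simp)] at hrange
  simp at hrange
  linear_combination hrange

lemma perk (n m k : ℕ) (hn : 2 ≤ n) (hk1 : 1 ≤ k) (hk2 : k ≤ n-1) :
    (((Real.sin ((m:ℝ)*Real.pi*k/n))^2 / (Real.sin (Real.pi*k/n))^2 : ℝ) : ℂ)
      = ∑ j ∈ Finset.range m, ∑ l ∈ Finset.range m,
          (Complex.exp (2*Real.pi*Complex.I/n) ^ ((j:ℤ)+(l:ℤ)-((m:ℤ)-1))) ^ k := by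
  have hn0 : (0:ℝ) < n := by positivity
  have hθpos : 0 < Real.pi * k / n := by
    have := Real.pi_pos
    have : (0:ℝ) < k := by exact_mod_cast hk1
    positivity
  have hθlt : Real.pi * k / n < Real.pi := by
    have hkn : (k:ℝ) < n := by exact_mod_cast (by omega : k < n)
    rw [div_lt_iff₀ hn0]
    have := Real.pi_pos
    nlinarith
  have hsθ : Real.sin (Real.pi * k / n) ≠ 0 :=
    ne_of_gt (Real.sin_pos_of_pos_of_lt_pi hθpos hθlt)
  set θ : ℝ := Real.pi * k / n with hθdef
  have hcs : Complex.sin (θ:ℂ) ≠ 0 := by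
    rw [← Complex.ofReal_sin]; exact_mod_cast hsθ
  have hd := dirichlet θ hsθ m
  set D : ℂ := Complex.exp (-((m:ℂ)-1)*θ*Complex.I) *
      ∑ j ∈ Finset.range m, Complex.exp (2*θ*Complex.I) ^ j with hD
  have hmθ : ((m:ℝ)*Real.pi*k/n : ℝ) = (m:ℝ) * θ := by rw [hθdef]; ring
  have lhs_eq : (((Real.sin ((m:ℝ)*Real.pi*k/n))^2 / (Real.sin θ)^2 : ℝ) : ℂ) = D^2 := by
    rw [hmθ]
    push_cast [Complex.ofReal_sin]
    rw [hd]
    field_simp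
  rw [lhs_eq, hD]
  rw [sq, mul_mul_mul_comm, ← Complex.exp_add, Finset.sum_mul_sum]
  rw [Finset.mul_sum]
  refine Finset.sum_congr rfl fun j hj => ?_
  rw [Finset.mul_sum]
  refine Finset.sum_congr rfl fun l hl => ?_
  rw [← pow_add, ← Complex.exp_nat_mul, ← Complex.exp_add,
      ← Complex.exp_int_mul, ← Complex.exp_nat_mul]
  congr 1
  rw [hθdef]
  push_cast
  have hn0' : (n:ℂ) ≠ 0 := by exact_mod_cast hn0.ne'
  field_simp
  ring

end SumSinAux

theorem sum_sin_sq_div_sin_sq (n m : ℕ) (hn : 2 ≤ n) (hm : 1 ≤ m) (hm' : m ≤ n - 1) :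
    ∑ k ∈ Finset.Icc 1 (n - 1),
        (Real.sin ((m : ℝ) * π * k / n)) ^ 2 / (Real.sin (π * k / n)) ^ 2
      = (m : ℝ) * ((n : ℝ) - m) := by
  have key : ((∑ k ∈ Finset.Icc 1 (n - 1),
        (Real.sin ((m : ℝ) * π * k / n)) ^ 2 / (Real.sin (π * k / n)) ^ 2 : ℝ) : ℂ)
      = ((m : ℂ) * ((n : ℂ) - m)) := by
    rw [Complex.ofReal_sum]
    have e1 : ∀ k ∈ Finset.Icc 1 (n-1),
        (((Real.sin ((m:ℝ)*Real.pi*(k:ℝ)/(n:ℝ)))^2 / (Real.sin (Real.pi*(k:ℝ)/(n:ℝ)))^2 : ℝ) : ℂ)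
          = ∑ j ∈ Finset.range m, ∑ l ∈ Finset.range m,
              (Complex.exp (2*Real.pi*Complex.I/n) ^ ((j:ℤ)+(l:ℤ)-((m:ℤ)-1))) ^ k := by
      intro k hk
      rw [Finset.mem_Icc] at hk
      exact SumSinAux.perk n m k hn hk.1 hk.2
    rw [Finset.sum_congr rfl e1, Finset.sum_comm]
    rw [Finset.sum_congr rfl (fun j (_ : j ∈ Finset.range m) => by rw [Finset.sum_comm])]
    have inner : ∀ j ∈ Finset.range m, ∀ l ∈ Finset.range m,
        ∑ k ∈ Finset.Icc 1 (n-1),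
          (Complex.exp (2*Real.pi*Complex.I/n) ^ ((j:ℤ)+(l:ℤ)-((m:ℤ)-1))) ^ k
        = if l = m - 1 - j then ((n:ℂ) - 1) else -1 := by
      intro j hj l hl
      rw [Finset.mem_range] at hj hl
      by_cases h : (j:ℤ)+(l:ℤ)-((m:ℤ)-1) = 0
      · have hl' : l = m - 1 - j := by omega
        rw [h, if_pos hl']
        simp [Nat.card_Icc]
        push_cast [Nat.cast_sub (by omega : 1 ≤ n)]
        ring
      · have hl' : l ≠ m - 1 - j := by omega
        rw [if_neg hl']
        apply SumSinAux.rootsum n hn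
        intro hdvd
        have habs : |(j:ℤ)+(l:ℤ)-((m:ℤ)-1)| < n := by
          rw [abs_lt]; constructor <;> omega
        rcases hdvd with ⟨c, hc⟩
        have hc0 : c = 0 := by
          by_contra hc0
          have h1 : (1:ℤ) ≤ |c| := Int.one_le_abs (by omega)
          rw [hc, abs_mul, abs_of_nonneg (show (0:ℤ) ≤ n by positivity)] at habs
          nlinarith [show (0:ℤ) < n from by exact_mod_cast (show 0 < n from by omega)]
        rw [hc0, mul_zero] at hc
        exact h hc
    rw [Finset.sum_congr rfl (fun j hj => Finset.sum_congr rfl (inner j hj))]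
    have row : ∀ j ∈ Finset.range m,
        ∑ l ∈ Finset.range m, (if l = m - 1 - j then ((n:ℂ) - 1) else -1)
          = (n:ℂ) - m := by
      intro j hj
      rw [Finset.mem_range] at hj
      have hb : m - 1 - j ∈ Finset.range m := by
        rw [Finset.mem_range]; omega
      rw [Finset.sum_congr rfl (fun l _ => by
        show (if l = m - 1 - j then ((n:ℂ) - 1) else -1)
          = -1 + (if l = m - 1 - j then ((n:ℂ) - 1) - (-1) else 0)
        split <;> ring)]
      rw [Finset.sum_add_distrib, Finset.sum_const, Finset.sum_ite_eq' _ _ (fun _ => ((n:ℂ)-1) - (-1)), if_pos hb]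
      simp
      ring
    rw [Finset.sum_congr rfl row, Finset.sum_const, Finset.card_range]
    simp
  exact_mod_cast key
end

section
/- For every integer n ≥ 2 and integer m with 1 ≤ m ≤ n−1, the sum over k from 1 to n−1 of sin²(mπk/n)/sin⁴(πk/n) equals m²(n−m)²/3 + (2/3)m(n−m). -/
open Real Finset


lemma sum_id_real (n : ℕ) : ∑ j ∈ range n, (j:ℝ) = n*(n-1)/2 := by
  induction n with
  | zero => simp
  | succ N ih => rw [Finset.sum_range_succ, ih]; push_cast; ring

lemma sum_sq_real (n : ℕ) : ∑ j ∈ range n, (j:ℝ)^2 = n*(n-1)*(2*n-1)/6 := by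
  induction n with
  | zero => simp
  | succ N ih => rw [Finset.sum_range_succ, ih]; push_cast; ring

lemma geom_zero_s3 {n : ℕ} (w : ℂ) (hw : w ≠ 1) (h : w^n = 1) :
    ∑ k ∈ range n, w^k = 0 := by
  rw [geom_sum_eq hw, h, sub_self, zero_div]

lemma lemJ (z : ℂ) (N : ℕ) :
    (z-1) * ∑ j ∈ range N, (j:ℂ)*z^j
      = ((N:ℂ)-1)*z^N - (∑ j ∈ range N, z^j) + 1 := by
  induction N with
  | zero => simp
  | succ N ih =>
    rw [Finset.sum_range_succ, Finset.sum_range_succ (f := fun j => z^j), mul_add, ih]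
    push_cast; ring


noncomputable def zet (n : ℕ) : ℂ := Complex.exp (2 * (π:ℝ) * Complex.I / n)

lemma zet_prim {n : ℕ} (hn : 2 ≤ n) : IsPrimitiveRoot (zet n) n :=
  Complex.isPrimitiveRoot_exp n (by omega)

lemma zet_abs {n : ℕ} (hn : 2 ≤ n) : ‖zet n‖ = 1 := by
  have : zet n = Complex.exp ((2 * π / n : ℝ) * Complex.I) := by
    unfold zet; push_cast; ring_nf
  rw [this, Complex.norm_exp_ofReal_mul_I]

lemma zet_conj_mul {n : ℕ} (hn : 2 ≤ n) : zet n * (starRingEnd ℂ) (zet n) = 1 := by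
  rw [Complex.mul_conj, Complex.normSq_eq_norm_sq, zet_abs hn]; norm_num

lemma orth {n : ℕ} (hn : 2 ≤ n) {j l : ℕ} (hj : j < n) (hl : l < n) :
    ∑ k ∈ range n, ((zet n)^j * (starRingEnd ℂ) ((zet n)^l))^k
      = if j = l then (n:ℂ) else 0 := by
  set ζ := zet n with hζ
  have hp := zet_prim hn
  have hζn : ζ^n = 1 := hp.pow_eq_one
  have hcn : ((starRingEnd ℂ) ζ)^n = 1 := by
    rw [← map_pow, hζn]; simp
  by_cases h : j = l
  · subst h
    simp only [if_pos rfl]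
    have : ζ^j * (starRingEnd ℂ) (ζ^j) = 1 := by
      rw [map_pow, ← mul_pow, zet_conj_mul hn, one_pow]
    rw [this]; simp
  · rw [if_neg h]
    apply geom_zero_s3
    · intro hcon
      apply h
      have h1 : ζ^j = ζ^l := by
        have := congrArg (· * ζ^l) hcon
        simp only [one_mul] at this
        rw [mul_assoc, map_pow, ← mul_pow, mul_comm ((starRingEnd ℂ) ζ) ζ,
          zet_conj_mul hn, one_pow, mul_one] at this
        exact this
      exact hp.pow_inj hj hl h1
    · rw [mul_pow, ← pow_mul, ← map_pow, ← pow_mul, mul_comm j n, mul_comm l n,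
        pow_mul, pow_mul, hζn]
      simp

noncomputable def Fc (n : ℕ) (k : ℕ) : ℂ := ∑ j ∈ range n, (j:ℂ) * (zet n)^(j*k)

lemma parseval {n : ℕ} (hn : 2 ≤ n) :
    ∑ k ∈ range n, Fc n k * (starRingEnd ℂ) (Fc n k)
      = n * ∑ j ∈ range n, (j:ℂ)^2 := by
  set ζ := zet n with hζ
  have step : ∀ k, Fc n k * (starRingEnd ℂ) (Fc n k)
      = ∑ j ∈ range n, ∑ l ∈ range n, (j:ℂ) * l * (ζ^j * (starRingEnd ℂ) (ζ^l))^k := by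
    intro k
    unfold Fc
    rw [map_sum, Finset.sum_mul_sum]
    apply Finset.sum_congr rfl; intro j _
    apply Finset.sum_congr rfl; intro l _
    have h1 : (starRingEnd ℂ) (ζ^(l*k)) = ((starRingEnd ℂ) (ζ^l))^k := by
      rw [← map_pow, ← pow_mul]
    rw [map_mul, map_natCast, h1, pow_mul ζ j k, mul_pow]
    ring
  calc ∑ k ∈ range n, Fc n k * (starRingEnd ℂ) (Fc n k)
      = ∑ k ∈ range n, ∑ j ∈ range n, ∑ l ∈ range n,
          (j:ℂ) * l * (ζ^j * (starRingEnd ℂ) (ζ^l))^k := by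
        exact Finset.sum_congr rfl (fun k _ => step k)
    _ = ∑ j ∈ range n, ∑ l ∈ range n, ∑ k ∈ range n,
          (j:ℂ) * l * (ζ^j * (starRingEnd ℂ) (ζ^l))^k := by
        rw [Finset.sum_comm]
        exact Finset.sum_congr rfl (fun j _ => Finset.sum_comm)
    _ = ∑ j ∈ range n, ∑ l ∈ range n,
          (j:ℂ) * l * (if j = l then (n:ℂ) else 0) := by
        apply Finset.sum_congr rfl; intro j hj
        apply Finset.sum_congr rfl; intro l hl
        rw [← Finset.mul_sum, orth hn (mem_range.mp hj) (mem_range.mp hl)]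
    _ = n * ∑ j ∈ range n, (j:ℂ)^2 := by
        rw [Finset.mul_sum]
        apply Finset.sum_congr rfl; intro j hj
        simp only [mul_ite, mul_zero, Finset.sum_ite_eq, hj, if_pos]
        ring

lemma zet_pow_exp (n : ℕ) (hn : 2 ≤ n) (k : ℕ) :
    (zet n)^k = Complex.exp ((2*π*k/n : ℝ) * Complex.I) := by
  unfold zet
  rw [← Complex.exp_nat_mul]
  congr 1
  have hn0 : (n:ℂ) ≠ 0 := by exact_mod_cast (by omega : n ≠ 0)
  push_cast
  field_simp

lemma normSq_zet_pow_sub_one {n : ℕ} (hn : 2 ≤ n) (k : ℕ) :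
    Complex.normSq ((zet n)^k - 1) = 4 * Real.sin (π*k/n)^2 := by
  rw [zet_pow_exp n hn k, Complex.normSq_apply]
  simp only [Complex.sub_re, Complex.sub_im, Complex.one_re, Complex.one_im,
    Complex.exp_ofReal_mul_I_re, Complex.exp_ofReal_mul_I_im]
  have h1 : Real.sin (π*k/n)^2 = 1/2 - Real.cos (2*(π*k/n))/2 := Real.sin_sq_eq_half_sub _
  have h2 : (2*π*k/n : ℝ) = 2*(π*k/n) := by ring
  rw [h2]
  have h3 := Real.sin_sq_add_cos_sq (2*(π*k/n))
  nlinarith [h1, h3]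

lemma Fc_eq {n : ℕ} (hn : 2 ≤ n) {k : ℕ} (hk1 : 1 ≤ k) (hk2 : k ≤ n - 1) :
    ((zet n)^k - 1) * Fc n k = n := by
  have hp := zet_prim hn
  have hne : (zet n)^k ≠ 1 := hp.pow_ne_one_of_pos_of_lt (by omega) (by omega)
  have hpow : ((zet n)^k)^n = 1 := by
    rw [← pow_mul, mul_comm, pow_mul, hp.pow_eq_one, one_pow]
  have hFc : Fc n k = ∑ j ∈ range n, (j:ℂ) * ((zet n)^k)^j := by
    unfold Fc
    exact Finset.sum_congr rfl (fun j _ => by rw [← pow_mul, mul_comm k j])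
  rw [hFc, lemJ, hpow, geom_zero_s3 _ hne hpow]
  ring

lemma normSq_Fc {n : ℕ} (hn : 2 ≤ n) {k : ℕ} (hk1 : 1 ≤ k) (hk2 : k ≤ n - 1) :
    1 / Real.sin (π*k/n)^2 = 4 * Complex.normSq (Fc n k) / n^2 := by
  have h1 := Fc_eq hn hk1 hk2
  have h2 := congrArg Complex.normSq h1
  rw [map_mul, normSq_zet_pow_sub_one hn k] at h2
  have h3 : Complex.normSq (n:ℂ) = (n:ℝ)^2 := by
    rw [Complex.normSq_natCast]; ring
  rw [h3] at h2
  have hs : Real.sin (π*k/n) ≠ 0 := by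
    apply ne_of_gt
    apply Real.sin_pos_of_pos_of_lt_pi
    · have : (0:ℝ) < π := Real.pi_pos
      have hk : (0:ℝ) < k := by exact_mod_cast hk1
      have hn' : (0:ℝ) < n := by positivity
      positivity
    · have hkn : (k:ℝ) < n := by exact_mod_cast (by omega : k < n)
      have hn' : (0:ℝ) < n := by positivity
      have hpi := Real.pi_pos
      have : π*k/n < π := by
        rw [div_lt_iff₀ hn']
        nlinarith
      exact this
  have hn' : (0:ℝ) < n := by positivity
  have hs2 : Real.sin (π*k/n)^2 ≠ 0 := pow_ne_zero _ hs
  field_simp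
  nlinarith [h2]

theorem sum_csc_sq {n : ℕ} (hn : 2 ≤ n) :
    ∑ k ∈ Finset.Icc 1 (n-1), 1 / Real.sin (π*k/n)^2 = ((n:ℝ)^2-1)/3 := by
  have hn0 : (n:ℝ) ≠ 0 := by positivity
  -- real parseval
  have hrp : ∑ k ∈ range n, Complex.normSq (Fc n k) = (n:ℝ) * (n*(n-1)*(2*n-1)/6) := by
    have h := parseval hn
    have hL : ∑ k ∈ range n, Fc n k * (starRingEnd ℂ) (Fc n k)
        = ((∑ k ∈ range n, Complex.normSq (Fc n k) : ℝ) : ℂ) := by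
      push_cast
      exact Finset.sum_congr rfl (fun k _ => Complex.mul_conj _)
    have hR : (n:ℂ) * ∑ j ∈ range n, (j:ℂ)^2
        = (((n:ℝ) * (n*(n-1)*(2*n-1)/6) : ℝ) : ℂ) := by
      rw [← sum_sq_real n]
      push_cast
      ring
    rw [hL, hR] at h
    exact_mod_cast h
  have hF0 : Complex.normSq (Fc n 0) = ((n:ℝ)*(n-1)/2)^2 := by
    have : Fc n 0 = (((n:ℝ)*(n-1)/2 : ℝ) : ℂ) := by
      unfold Fc
      simp only [mul_zero, pow_zero, mul_one]
      rw [← sum_id_real n]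
      push_cast
      rfl
    rw [this, Complex.normSq_ofReal]
    ring
  have hins : range n = insert 0 (Finset.Icc 1 (n-1)) := by
    ext x; simp [Finset.mem_range, Finset.mem_Icc]; omega
  have hsplit : ∑ k ∈ Finset.Icc 1 (n-1), Complex.normSq (Fc n k)
      = (n:ℝ) * (n*(n-1)*(2*n-1)/6) - ((n:ℝ)*(n-1)/2)^2 := by
    rw [← hrp, hins, Finset.sum_insert (by simp), hF0]
    ring
  calc ∑ k ∈ Finset.Icc 1 (n-1), 1 / Real.sin (π*k/n)^2
      = ∑ k ∈ Finset.Icc 1 (n-1), 4 * Complex.normSq (Fc n k) / n^2 := by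
        apply Finset.sum_congr rfl
        intro k hk
        rw [Finset.mem_Icc] at hk
        exact normSq_Fc hn hk.1 hk.2
    _ = 4 / n^2 * ∑ k ∈ Finset.Icc 1 (n-1), Complex.normSq (Fc n k) := by
        rw [Finset.mul_sum]
        exact Finset.sum_congr rfl (fun k _ => by ring)
    _ = ((n:ℝ)^2-1)/3 := by
        rw [hsplit]
        field_simp
        ring

lemma sin_ne {n : ℕ} (hn : 2 ≤ n) {k : ℕ} (hk : k ∈ Finset.Icc 1 (n-1)) :
    Real.sin (π*k/n) ≠ 0 := by
  rw [Finset.mem_Icc] at hk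
  obtain ⟨hk1, hk2⟩ := hk
  apply ne_of_gt
  apply Real.sin_pos_of_pos_of_lt_pi
  · have hpi := Real.pi_pos
    have hk : (0:ℝ) < k := by exact_mod_cast hk1
    have hn' : (0:ℝ) < n := by positivity
    positivity
  · have hkn : (k:ℝ) < n := by exact_mod_cast (by omega : k < n)
    have hn' : (0:ℝ) < n := by positivity
    have hpi := Real.pi_pos
    rw [div_lt_iff₀ hn']
    nlinarith

lemma cos_sum {n : ℕ} (hn : 2 ≤ n) {d : ℕ} (hd1 : 1 ≤ d) (hd2 : d ≤ n-1) :
    ∑ k ∈ Finset.Icc 1 (n-1), Real.cos (2*π*d*k/n) = -1 := by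
  have hp := zet_prim hn
  have hne : (zet n)^d ≠ 1 := hp.pow_ne_one_of_pos_of_lt (by omega) (by omega)
  have hpow : ((zet n)^d)^n = 1 := by
    rw [← pow_mul, mul_comm, pow_mul, hp.pow_eq_one, one_pow]
  have hz : ∑ k ∈ range n, ((zet n)^d)^k = 0 := geom_zero_s3 _ hne hpow
  have h0 : ∑ k ∈ range n, Real.cos (2*π*d*k/n) = 0 := by
    have := congrArg Complex.re hz
    rw [Complex.re_sum] at this
    simp only [Complex.zero_re] at this
    rw [← this]
    apply Finset.sum_congr rfl; intro k _
    rw [← pow_mul, zet_pow_exp n hn (d*k), Complex.exp_ofReal_mul_I_re]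
    congr 1
    push_cast
    ring
  have hins : range n = insert 0 (Finset.Icc 1 (n-1)) := by
    ext x; simp [Finset.mem_range, Finset.mem_Icc]; omega
  rw [hins, Finset.sum_insert (by simp)] at h0
  simp only [Nat.cast_zero, mul_zero, zero_div, Real.cos_zero] at h0
  linarith

lemma trig1 (A x : ℝ) : Real.sin (A+4*x)
    = 2*Real.sin (A+2*x) - Real.sin A - 4*Real.sin (A+2*x)*Real.sin x^2 := by
  have h1 : Real.sin ((A+2*x)+(2*x)) + Real.sin ((A+2*x)-(2*x))
      = 2*Real.sin (A+2*x)*Real.cos (2*x) := by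
    rw [Real.sin_add, Real.sin_sub]; ring
  rw [show (A+2*x)+(2*x) = A+4*x by ring, show (A+2*x)-(2*x) = A by ring] at h1
  have h3 : Real.cos (2*x) = 1 - 2*Real.sin x^2 := by
    have := Real.sin_sq_eq_half_sub x
    linarith
  linear_combination h1 + 2*Real.sin (A+2*x)*h3

lemma trig2 (A x : ℝ) :
    Real.cos (A+x) - Real.cos (A+3*x) = 2*Real.sin (A+2*x)*Real.sin x := by
  have key : ∀ B : ℝ, Real.cos (B-x) - Real.cos (B+x) = 2*Real.sin B*Real.sin x := by
    intro B; rw [Real.cos_sub, Real.cos_add]; ring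
  have h := key (A+2*x)
  rw [show (A+2*x)-x = A+x by ring, show (A+2*x)+x = A+3*x by ring] at h
  exact h

lemma trigS (a x : ℝ) : Real.sin (a+x)^2 = Real.sin a^2 + Real.sin (a+a+x) * Real.sin x := by
  simp only [Real.sin_add, Real.cos_add]
  linear_combination (Real.sin a)^2 * (Real.sin_sq_add_cos_sq x)

lemma alg1 {s a b c C1 C2 : ℝ} (hs : s ≠ 0) (h1 : a = 2*b - c - 4*b*s^2)
    (h2 : C1 - C2 = 2*b*s) : a/s = 2*(b/s) - c/s - 2*C1 + 2*C2 := by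
  field_simp
  linear_combination h1 + 2*s*h2
lemma alg2 {s a b c : ℝ} (hs : s ≠ 0) (h1 : a = 2*b - c - 4*b*s^2) :
    a/s^3 = 2*(b/s^3) - c/s^3 - 4*(b/s) := by
  field_simp
  linear_combination h1
lemma alg3 {s A B C : ℝ} (hs : s ≠ 0) (h : A = B + C*s) :
    A/s^4 = B/s^4 + C/s^3 := by
  field_simp
  linear_combination h

noncomputable def Dv (n r : ℕ) : ℝ :=
  ∑ k ∈ Finset.Icc 1 (n-1), Real.sin ((2*(r:ℝ)+1)*(π*k/n)) / Real.sin (π*k/n)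

noncomputable def Tv (n r : ℕ) : ℝ :=
  ∑ k ∈ Finset.Icc 1 (n-1), Real.sin ((2*(r:ℝ)+1)*(π*k/n)) / Real.sin (π*k/n)^3

lemma card_Icc_real {n : ℕ} (hn : 2 ≤ n) :
    ((Finset.Icc 1 (n-1)).card : ℝ) = (n:ℝ) - 1 := by
  rw [Nat.card_Icc]
  have : n - 1 + 1 - 1 = n - 1 := by omega
  rw [this]
  push_cast [Nat.cast_sub (by omega : 1 ≤ n)]
  ring

lemma D_zero {n : ℕ} (hn : 2 ≤ n) : Dv n 0 = (n:ℝ) - 1 := by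
  unfold Dv
  have h : ∀ k ∈ Finset.Icc 1 (n-1),
      Real.sin ((2*((0:ℕ):ℝ)+1)*(π*k/n)) / Real.sin (π*k/n) = 1 := by
    intro k hk
    have hs := sin_ne hn hk
    rw [show (2*((0:ℕ):ℝ)+1)*(π*k/n) = π*k/n by push_cast; ring]
    field_simp
  rw [Finset.sum_congr rfl h, Finset.sum_const, nsmul_eq_mul, mul_one, card_Icc_real hn]

lemma D_one {n : ℕ} (hn : 2 ≤ n) : Dv n 1 = (n:ℝ) - 3 := by
  unfold Dv
  have h : ∀ k ∈ Finset.Icc 1 (n-1),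
      Real.sin ((2*((1:ℕ):ℝ)+1)*(π*k/n)) / Real.sin (π*k/n)
        = 1 + 2*Real.cos (2*π*((1:ℕ):ℝ)*k/n) := by
    intro k hk
    have hs := sin_ne hn hk
    rw [show (2*((1:ℕ):ℝ)+1)*(π*k/n) = 3*(π*k/n) by push_cast; ring]
    rw [Real.sin_three_mul]
    have hsq : Real.sin (π*k/n)^2 = 1/2 - Real.cos (2*(π*k/n))/2 :=
      Real.sin_sq_eq_half_sub _
    rw [show (2:ℝ)*π*((1:ℕ):ℝ)*k/n = 2*(π*k/n) by push_cast; ring]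
    rw [div_eq_iff hs]
    linear_combination (-4*Real.sin (π*k/n))*hsq
  rw [Finset.sum_congr rfl h, Finset.sum_add_distrib, Finset.sum_const, ← Finset.mul_sum,
    cos_sum hn (le_refl 1) (by omega), nsmul_eq_mul, mul_one, card_Icc_real hn]
  ring

lemma D_step {n : ℕ} (hn : 2 ≤ n) (r : ℕ) (hr : r+2 ≤ n-1) :
    Dv n (r+2) = 2*Dv n (r+1) - Dv n r := by
  have hptw : ∀ k ∈ Finset.Icc 1 (n-1),
      Real.sin ((2*((r+2:ℕ):ℝ)+1)*(π*k/n)) / Real.sin (π*k/n)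
        = 2*(Real.sin ((2*((r+1:ℕ):ℝ)+1)*(π*k/n)) / Real.sin (π*k/n))
          - Real.sin ((2*(r:ℝ)+1)*(π*k/n)) / Real.sin (π*k/n)
          - 2*Real.cos (2*π*((r+1:ℕ):ℝ)*k/n) + 2*Real.cos (2*π*((r+2:ℕ):ℝ)*k/n) := by
    intro k hk
    have hs := sin_ne hn hk
    have h1 := trig1 ((2*(r:ℝ)+1)*(π*k/n)) (π*k/n)
    have h2 := trig2 ((2*(r:ℝ)+1)*(π*k/n)) (π*k/n)
    rw [show (2*(r:ℝ)+1)*(π*k/n)+4*(π*k/n) = (2*((r+2:ℕ):ℝ)+1)*(π*k/n) by push_cast; ring,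
      show (2*(r:ℝ)+1)*(π*k/n)+2*(π*k/n) = (2*((r+1:ℕ):ℝ)+1)*(π*k/n) by push_cast; ring] at h1
    rw [show (2*(r:ℝ)+1)*(π*k/n)+(π*k/n) = 2*π*((r+1:ℕ):ℝ)*k/n by push_cast; ring,
      show (2*(r:ℝ)+1)*(π*k/n)+3*(π*k/n) = 2*π*((r+2:ℕ):ℝ)*k/n by push_cast; ring,
      show (2*(r:ℝ)+1)*(π*k/n)+2*(π*k/n) = (2*((r+1:ℕ):ℝ)+1)*(π*k/n) by push_cast; ring] at h2
    exact alg1 hs h1 h2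
  unfold Dv
  rw [Finset.sum_congr rfl hptw]
  simp only [Finset.sum_add_distrib, Finset.sum_sub_distrib, ← Finset.mul_sum]
  rw [cos_sum hn (by omega : 1 ≤ r+1) (by omega), cos_sum hn (by omega : 1 ≤ r+2) (by omega)]
  ring

lemma D_val {n : ℕ} (hn : 2 ≤ n) : ∀ r : ℕ, r ≤ n-1 → Dv n r = (n:ℝ)-1-2*r := by
  have key : ∀ r : ℕ, (r ≤ n-1 → Dv n r = (n:ℝ)-1-2*r)
      ∧ (r+1 ≤ n-1 → Dv n (r+1) = (n:ℝ)-1-2*(r+1:ℕ)) := by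
    intro r
    induction r with
    | zero =>
      constructor
      · intro _; rw [D_zero hn]; push_cast; ring
      · intro _; rw [D_one hn]; push_cast; ring
    | succ r ih =>
      refine ⟨ih.2, fun h => ?_⟩
      rw [D_step hn r (by omega), ih.1 (by omega), ih.2 (by omega)]
      push_cast
      ring
  intro r hr
  exact (key r).1 hr

lemma T_zero {n : ℕ} (hn : 2 ≤ n) : Tv n 0 = ((n:ℝ)^2-1)/3 := by
  unfold Tv
  have h : ∀ k ∈ Finset.Icc 1 (n-1),
      Real.sin ((2*((0:ℕ):ℝ)+1)*(π*k/n)) / Real.sin (π*k/n)^3 = 1 / Real.sin (π*k/n)^2 := by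
    intro k hk
    have hs := sin_ne hn hk
    rw [show (2*((0:ℕ):ℝ)+1)*(π*k/n) = π*k/n by push_cast; ring]
    field_simp
  rw [Finset.sum_congr rfl h, sum_csc_sq hn]

lemma T_one {n : ℕ} (hn : 2 ≤ n) : Tv n 1 = (n:ℝ)^2 - 4*n + 3 := by
  unfold Tv
  have h : ∀ k ∈ Finset.Icc 1 (n-1),
      Real.sin ((2*((1:ℕ):ℝ)+1)*(π*k/n)) / Real.sin (π*k/n)^3
        = 3*(1 / Real.sin (π*k/n)^2) - 4 := by
    intro k hk
    have hs := sin_ne hn hk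
    rw [show (2*((1:ℕ):ℝ)+1)*(π*k/n) = 3*(π*k/n) by push_cast; ring, Real.sin_three_mul]
    field_simp
  rw [Finset.sum_congr rfl h, Finset.sum_sub_distrib, ← Finset.mul_sum, sum_csc_sq hn,
    Finset.sum_const, nsmul_eq_mul, card_Icc_real hn]
  ring

lemma T_step {n : ℕ} (hn : 2 ≤ n) (r : ℕ) (hr : r+2 ≤ n-1) :
    Tv n (r+2) = 2*Tv n (r+1) - Tv n r - 4*Dv n (r+1) := by
  have hptw : ∀ k ∈ Finset.Icc 1 (n-1),
      Real.sin ((2*((r+2:ℕ):ℝ)+1)*(π*k/n)) / Real.sin (π*k/n)^3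
        = 2*(Real.sin ((2*((r+1:ℕ):ℝ)+1)*(π*k/n)) / Real.sin (π*k/n)^3)
          - Real.sin ((2*(r:ℝ)+1)*(π*k/n)) / Real.sin (π*k/n)^3
          - 4*(Real.sin ((2*((r+1:ℕ):ℝ)+1)*(π*k/n)) / Real.sin (π*k/n)) := by
    intro k hk
    have hs := sin_ne hn hk
    have h1 := trig1 ((2*(r:ℝ)+1)*(π*k/n)) (π*k/n)
    rw [show (2*(r:ℝ)+1)*(π*k/n)+4*(π*k/n) = (2*((r+2:ℕ):ℝ)+1)*(π*k/n) by push_cast; ring,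
      show (2*(r:ℝ)+1)*(π*k/n)+2*(π*k/n) = (2*((r+1:ℕ):ℝ)+1)*(π*k/n) by push_cast; ring] at h1
    exact alg2 hs h1
  unfold Tv Dv
  rw [Finset.sum_congr rfl hptw]
  simp only [Finset.sum_sub_distrib, ← Finset.mul_sum]

lemma T_val {n : ℕ} (hn : 2 ≤ n) : ∀ r : ℕ, r ≤ n-1 →
    Tv n r = (4*(r:ℝ)^3 - 6*((n:ℝ)-1)*(r:ℝ)^2 + (2*(n:ℝ)^2-6*(n:ℝ))*(r:ℝ) + (n:ℝ)^2-1)/3 := by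
  have key : ∀ r : ℕ, (r ≤ n-1 →
      Tv n r = (4*(r:ℝ)^3 - 6*((n:ℝ)-1)*(r:ℝ)^2 + (2*(n:ℝ)^2-6*(n:ℝ))*(r:ℝ) + (n:ℝ)^2-1)/3)
      ∧ (r+1 ≤ n-1 →
      Tv n (r+1) = (4*((r+1:ℕ):ℝ)^3 - 6*((n:ℝ)-1)*((r+1:ℕ):ℝ)^2
        + (2*(n:ℝ)^2-6*(n:ℝ))*((r+1:ℕ):ℝ) + (n:ℝ)^2-1)/3) := by
    intro r
    induction r with
    | zero =>
      constructor
      · intro _; rw [T_zero hn]; push_cast; ring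
      · intro _; rw [T_one hn]; push_cast; ring
    | succ r ih =>
      refine ⟨ih.2, fun h => ?_⟩
      rw [T_step hn r (by omega), ih.1 (by omega), ih.2 (by omega),
        D_val hn (r+1) (by omega)]
      push_cast
      ring
  intro r hr
  exact (key r).1 hr

lemma S_val {n : ℕ} (hn : 2 ≤ n) : ∀ m : ℕ, 1 ≤ m → m ≤ n-1 →
    ∑ k ∈ Finset.Icc 1 (n-1), Real.sin ((m:ℝ)*(π*k/n))^2 / Real.sin (π*k/n)^4
      = (m:ℝ)^2*((n:ℝ)-m)^2/3 + 2/3*m*((n:ℝ)-m) := by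
  intro m hm
  induction m, hm using Nat.le_induction with
  | base =>
    intro _
    have h : ∀ k ∈ Finset.Icc 1 (n-1),
        Real.sin (((1:ℕ):ℝ)*(π*k/n))^2 / Real.sin (π*k/n)^4 = 1 / Real.sin (π*k/n)^2 := by
      intro k hk
      have hs := sin_ne hn hk
      rw [show ((1:ℕ):ℝ)*(π*k/n) = π*k/n by push_cast; ring]
      field_simp
    rw [Finset.sum_congr rfl h, sum_csc_sq hn]
    push_cast
    ring
  | succ m hm ih =>
    intro hm'
    have hmn : m ≤ n-1 := by omega
    have hptw : ∀ k ∈ Finset.Icc 1 (n-1),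
        Real.sin (((m+1:ℕ):ℝ)*(π*k/n))^2 / Real.sin (π*k/n)^4
          = Real.sin ((m:ℝ)*(π*k/n))^2 / Real.sin (π*k/n)^4
            + Real.sin ((2*(m:ℝ)+1)*(π*k/n)) / Real.sin (π*k/n)^3 := by
      intro k hk
      have hs := sin_ne hn hk
      have h := trigS ((m:ℝ)*(π*k/n)) (π*k/n)
      rw [show (m:ℝ)*(π*k/n)+(π*k/n) = ((m+1:ℕ):ℝ)*(π*k/n) by push_cast; ring,
        show (m:ℝ)*(π*k/n)+(m:ℝ)*(π*k/n)+(π*k/n) = (2*(m:ℝ)+1)*(π*k/n) by ring] at h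
      exact alg3 hs h
    rw [Finset.sum_congr rfl hptw, Finset.sum_add_distrib, ih hmn]
    have hT : ∑ k ∈ Finset.Icc 1 (n-1),
        Real.sin ((2*(m:ℝ)+1)*(π*k/n)) / Real.sin (π*k/n)^3 = Tv n m := rfl
    rw [hT, T_val hn m hmn]
    push_cast
    ring

theorem sum_sin_sq_div_sin_pow_four (n m : ℕ) (hn : 2 ≤ n) (hm : 1 ≤ m) (hm' : m ≤ n - 1) :
    ∑ k ∈ Finset.Icc 1 (n - 1),
        (Real.sin ((m : ℝ) * π * k / n)) ^ 2 / (Real.sin (π * k / n)) ^ 4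
      = (m : ℝ) ^ 2 * ((n : ℝ) - m) ^ 2 / 3 + (2 / 3) * m * ((n : ℝ) - m) := by
  have h : ∀ k ∈ Finset.Icc 1 (n-1),
      (Real.sin ((m : ℝ) * π * k / n)) ^ 2 / (Real.sin (π * k / n)) ^ 4
        = Real.sin ((m:ℝ)*(π*k/n))^2 / Real.sin (π*k/n)^4 := by
    intro k hk
    rw [show (m:ℝ)*π*k/n = (m:ℝ)*(π*k/n) by ring]
  rw [Finset.sum_congr rfl h, S_val hn m hm hm']
end

section
/- Let n ≥ 2 and let A be the n×n real symmetric circulant matrix with off-diagonal entries A_{ij} = −3/(n⁴ sin⁴(π(i−j)/n)) + 2/(n⁴ sin²(π(i−j)/n)) for i ≠ j, and diagonal entries A_{ii} = (n²−1)(n²+11)/(15n⁴) − (2n²−2)/(3n⁴). Then for each k with 0 ≤ k ≤ n−1, the vector v_k with components (v_k)_j = e^{2πijk/n} is an eigenvector of A with eigenvalue λ_k = 2k²(n−k)²/n⁴. -/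
open Real Matrix Finset

private lemma shift_lemma (n : ℕ) (ζ : ℂ) (hζ : ζ ^ n = 1) (f : ℂ → ℂ) :
    (ζ - 1) * ∑ m ∈ range n, f m * ζ ^ m
      = (∑ m ∈ range n, (f ((m : ℂ) - 1) - f m) * ζ ^ m) + f ((n : ℂ) - 1) - f (-1) := by
  have h1 : ∑ m ∈ range n, f m * ζ ^ (m+1)
      = (∑ m ∈ range n, f ((m:ℂ) - 1) * ζ ^ m) + f ((n:ℂ)-1) * ζ ^ n - f (-1) := by
    have h2 : ∀ m : ℕ, f (m:ℂ) * ζ ^ (m+1) = f (((m+1:ℕ):ℂ) - 1) * ζ ^ (m+1) := by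
      intro m
      have : (((m+1:ℕ):ℂ) - 1) = (m:ℂ) := by push_cast; ring
      rw [this]
    calc ∑ m ∈ range n, f (m:ℂ) * ζ^(m+1)
        = ∑ m ∈ range n, f (((m+1:ℕ):ℂ)-1) * ζ^(m+1) :=
          Finset.sum_congr rfl fun m _ => h2 m
      _ = (∑ m ∈ range (n+1), f ((m:ℂ)-1)*ζ^m) - f (((0:ℕ):ℂ)-1)*ζ^0 := by
          rw [Finset.sum_range_succ' (fun m => f ((m:ℂ)-1)*ζ^m) n]; push_cast; ring
      _ = _ := by rw [Finset.sum_range_succ, pow_zero, mul_one, Nat.cast_zero, zero_sub]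
  have h3 : ∑ m ∈ range n, (f ((m:ℂ)-1) - f (m:ℂ)) * ζ^m
      = (∑ m ∈ range n, f ((m:ℂ)-1)*ζ^m) - ∑ m ∈ range n, f (m:ℂ)*ζ^m := by
    rw [← Finset.sum_sub_distrib]
    exact Finset.sum_congr rfl fun m _ => by ring
  calc (ζ-1) * ∑ m ∈ range n, f (m:ℂ) * ζ^m
      = (∑ m ∈ range n, f (m:ℂ) * ζ^(m+1)) - ∑ m ∈ range n, f (m:ℂ) * ζ^m := by
        rw [sub_mul, one_mul, Finset.mul_sum]
        congr 1
        exact Finset.sum_congr rfl fun m _ => by ring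
    _ = _ := by rw [h1, hζ, h3]; ring

private lemma key_sum (n : ℕ) (ζ : ℂ) (hζn : ζ ^ n = 1) (hζ1 : ζ ≠ 1) :
    (ζ - 1)^4 * ∑ m ∈ range n, (m:ℂ)^2 * ((n:ℂ) - (m:ℂ))^2 * ζ^m
      = -24*(n:ℂ)*ζ^2 - 4*(n:ℂ)*ζ*(ζ-1)^2 := by
  set N := (n:ℂ) with hN
  set S0 := ∑ m ∈ range n, ζ^m with hS0def
  set S1 := ∑ m ∈ range n, (m:ℂ) * ζ^m with hS1def
  set S2 := ∑ m ∈ range n, (m:ℂ)^2 * ζ^m with hS2def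
  set S3 := ∑ m ∈ range n, (m:ℂ)^3 * ζ^m with hS3def
  set S4 := ∑ m ∈ range n, (m:ℂ)^4 * ζ^m with hS4def
  have expand : ∀ a b c d e : ℂ, ∑ m ∈ range n,
      (a + b*(m:ℂ) + c*(m:ℂ)^2 + d*(m:ℂ)^3 + e*(m:ℂ)^4) * ζ^m
      = a*S0 + b*S1 + c*S2 + d*S3 + e*S4 := by
    intro a b c d e
    rw [hS0def, hS1def, hS2def, hS3def, hS4def, Finset.mul_sum, Finset.mul_sum,
      Finset.mul_sum, Finset.mul_sum, Finset.mul_sum, ← Finset.sum_add_distrib,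
      ← Finset.sum_add_distrib, ← Finset.sum_add_distrib, ← Finset.sum_add_distrib]
    exact Finset.sum_congr rfl fun m _ => by ring
  have hS0 : S0 = 0 := by
    rw [hS0def, geom_sum_eq hζ1, hζn, sub_self, zero_div]
  have h1 : (ζ-1) * S1 = N := by
    have h := shift_lemma n ζ hζn (fun x => x)
    rw [hS1def]
    calc (ζ-1) * ∑ m ∈ range n, (m:ℂ) * ζ^m = (ζ-1) * ∑ m ∈ range n, (fun x : ℂ => x) (m:ℂ) * ζ^m := rfl
      _ = (∑ m ∈ range n, (((m:ℂ) - 1) - (m:ℂ)) * ζ^m) + ((N:ℂ) - 1) - (-1) := h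
      _ = (∑ m ∈ range n, ((-1) + 0*(m:ℂ) + 0*(m:ℂ)^2 + 0*(m:ℂ)^3 + 0*(m:ℂ)^4) * ζ^m) + N := by
        rw [show (∑ m ∈ range n, (((m:ℂ) - 1) - (m:ℂ)) * ζ^m) = ∑ m ∈ range n, ((-1) + 0*(m:ℂ) + 0*(m:ℂ)^2 + 0*(m:ℂ)^3 + 0*(m:ℂ)^4) * ζ^m from Finset.sum_congr rfl fun m _ => by ring]
        ring
      _ = N := by rw [expand, hS0]; ring
  have h2 : (ζ-1) * S2 = -2*S1 + N^2 - 2*N := by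
    have h := shift_lemma n ζ hζn (fun x => x^2)
    rw [hS2def]
    calc (ζ-1) * ∑ m ∈ range n, (m:ℂ)^2 * ζ^m
        = (∑ m ∈ range n, (((m:ℂ) - 1)^2 - (m:ℂ)^2) * ζ^m) + ((N:ℂ) - 1)^2 - (-1:ℂ)^2 := h
      _ = (∑ m ∈ range n, ((1:ℂ) + (-2)*(m:ℂ) + 0*(m:ℂ)^2 + 0*(m:ℂ)^3 + 0*(m:ℂ)^4) * ζ^m) + (N-1)^2 - 1 := by
        rw [Finset.sum_congr rfl fun m (_ : m ∈ range n) => show (((m:ℂ) - 1)^2 - (m:ℂ)^2) * ζ^m = ((1:ℂ) + (-2)*(m:ℂ) + 0*(m:ℂ)^2 + 0*(m:ℂ)^3 + 0*(m:ℂ)^4) * ζ^m from by ring]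
        ring
      _ = _ := by rw [expand, hS0]; ring
  have h3 : (ζ-1) * S3 = -3*S2 + 3*S1 + N^3 - 3*N^2 + 3*N - 1 + 1 := by
    have h := shift_lemma n ζ hζn (fun x => x^3)
    rw [hS3def]
    calc (ζ-1) * ∑ m ∈ range n, (m:ℂ)^3 * ζ^m
        = (∑ m ∈ range n, (((m:ℂ) - 1)^3 - (m:ℂ)^3) * ζ^m) + ((N:ℂ) - 1)^3 - (-1:ℂ)^3 := h
      _ = (∑ m ∈ range n, ((-1:ℂ) + 3*(m:ℂ) + (-3)*(m:ℂ)^2 + 0*(m:ℂ)^3 + 0*(m:ℂ)^4) * ζ^m) + (N-1)^3 + 1 := by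
        rw [Finset.sum_congr rfl fun m (_ : m ∈ range n) => show (((m:ℂ) - 1)^3 - (m:ℂ)^3) * ζ^m = ((-1:ℂ) + 3*(m:ℂ) + (-3)*(m:ℂ)^2 + 0*(m:ℂ)^3 + 0*(m:ℂ)^4) * ζ^m from by ring]
        ring
      _ = _ := by rw [expand, hS0]; ring
  have h4 : (ζ-1) * S4 = -4*S3 + 6*S2 - 4*S1 + N^4 - 4*N^3 + 6*N^2 - 4*N := by
    have h := shift_lemma n ζ hζn (fun x => x^4)
    rw [hS4def]
    calc (ζ-1) * ∑ m ∈ range n, (m:ℂ)^4 * ζ^m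
        = (∑ m ∈ range n, (((m:ℂ) - 1)^4 - (m:ℂ)^4) * ζ^m) + ((N:ℂ) - 1)^4 - (-1:ℂ)^4 := h
      _ = (∑ m ∈ range n, ((1:ℂ) + (-4)*(m:ℂ) + 6*(m:ℂ)^2 + (-4)*(m:ℂ)^3 + 0*(m:ℂ)^4) * ζ^m) + (N-1)^4 - 1 := by
        rw [Finset.sum_congr rfl fun m (_ : m ∈ range n) => show (((m:ℂ) - 1)^4 - (m:ℂ)^4) * ζ^m = ((1:ℂ) + (-4)*(m:ℂ) + 6*(m:ℂ)^2 + (-4)*(m:ℂ)^3 + 0*(m:ℂ)^4) * ζ^m from by ring]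
        ring
      _ = _ := by rw [expand, hS0]; ring
  have hmain : ∑ m ∈ range n, (m:ℂ)^2 * ((n:ℂ) - (m:ℂ))^2 * ζ^m = N^2*S2 - 2*N*S3 + S4 := by
    calc ∑ m ∈ range n, (m:ℂ)^2 * ((n:ℂ) - (m:ℂ))^2 * ζ^m
        = ∑ m ∈ range n, ((0:ℂ) + 0*(m:ℂ) + N^2*(m:ℂ)^2 + (-2*N)*(m:ℂ)^3 + 1*(m:ℂ)^4) * ζ^m := by
          rw [← hN]
          exact Finset.sum_congr rfl fun m _ => by ring
      _ = _ := by rw [expand, hS0]; ring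
  rw [hmain]
  have e2 : (ζ-1)^2*S2 = -2*N + (N^2-2*N)*(ζ-1) := by linear_combination (ζ-1)*h2 - 2*h1
  have e3 : (ζ-1)^3*S3 = 6*N + (-3*N^2+9*N)*(ζ-1) + (N^3-3*N^2+3*N)*(ζ-1)^2 := by
    linear_combination (ζ-1)^2*h3 - 3*e2 + 3*(ζ-1)*h1
  have e4 : (ζ-1)^4*S4 = -24*N + (12*N^2-48*N)*(ζ-1) + (-4*N^3+18*N^2-28*N)*(ζ-1)^2
      + (N^4-4*N^3+6*N^2-4*N)*(ζ-1)^3 := by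
    linear_combination (ζ-1)^3*h4 - 4*e3 + 6*(ζ-1)*e2 - 4*(ζ-1)^2*h1
  linear_combination N^2*(ζ-1)^2*e2 - 2*N*(ζ-1)*e3 + e4

private lemma sq_sum_closed (n : ℕ) (x : ℂ) :
    ∑ m ∈ range n, (m:ℂ)^2 * (x - (m:ℂ))^2
      = x^2 * ((n:ℂ)*((n:ℂ)-1)*(2*(n:ℂ)-1)/6) - 2*x*((n:ℂ)*((n:ℂ)-1)/2)^2
        + (n:ℂ)*((n:ℂ)-1)*(2*(n:ℂ)-1)*(3*(n:ℂ)^2-3*(n:ℂ)-1)/30 := by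
  induction n with
  | zero => simp
  | succ n ih => rw [Finset.sum_range_succ, ih]; push_cast; ring

private lemma diag_sum (n : ℕ) :
    ∑ m ∈ range n, (m:ℂ)^2 * ((n:ℂ) - (m:ℂ))^2 = (n:ℂ)*((n:ℂ)^4-1)/30 := by
  rw [sq_sum_closed]; ring

theorem circulant_eigenvector (n : ℕ) (hn : 2 ≤ n)
    (A : Matrix (Fin n) (Fin n) ℝ)
    (hA : ∀ i j : Fin n, i ≠ j →
      A i j = -3 / ((n : ℝ) ^ 4 * Real.sin (π * (((i : ℕ) : ℝ) - ((j : ℕ) : ℝ)) / n) ^ 4)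
        + 2 / ((n : ℝ) ^ 4 * Real.sin (π * (((i : ℕ) : ℝ) - ((j : ℕ) : ℝ)) / n) ^ 2))
    (hAd : ∀ i : Fin n, A i i
      = ((n : ℝ) ^ 2 - 1) * ((n : ℝ) ^ 2 + 11) / (15 * (n : ℝ) ^ 4)
        - (2 * (n : ℝ) ^ 2 - 2) / (3 * (n : ℝ) ^ 4))
    (k : Fin n) :
    (A.map (fun a => (a : ℂ))).mulVec
        (fun j : Fin n => Complex.exp (2 * (π : ℂ) * Complex.I * ((j : ℕ) : ℂ) * ((k : ℕ) : ℂ) / (n : ℂ)))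
      = ((2 * ((k : ℕ) : ℝ) ^ 2 * ((n : ℝ) - ((k : ℕ) : ℝ)) ^ 2 / (n : ℝ) ^ 4 : ℝ) : ℂ) •
        (fun j : Fin n => Complex.exp (2 * (π : ℂ) * Complex.I * ((j : ℕ) : ℂ) * ((k : ℕ) : ℂ) / (n : ℂ))) := by
  have hn0 : (n:ℂ) ≠ 0 := Nat.cast_ne_zero.mpr (by omega)
  set ω : ℂ := Complex.exp (2 * (π:ℂ) * Complex.I / n) with hωdef
  have hprim : IsPrimitiveRoot ω n := Complex.isPrimitiveRoot_exp n (by omega)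
  have hω1 : ω ^ n = 1 := (hprim.pow_eq_one_iff_dvd n).mpr dvd_rfl
  have hωne : ω ≠ 0 := by rw [hωdef]; exact Complex.exp_ne_zero _
  set Λ : ℕ → ℂ := fun m => 2*(m:ℂ)^2*((n:ℂ)-(m:ℂ))^2/(n:ℂ)^4 with hΛdef
  have hv : ∀ j : Fin n,
      Complex.exp (2 * (π : ℂ) * Complex.I * ((j : ℕ) : ℂ) * ((k : ℕ) : ℂ) / (n : ℂ))
        = ω ^ ((j:ℕ) * (k:ℕ)) := by
    intro j
    rw [hωdef, ← Complex.exp_nat_mul]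
    congr 1
    push_cast
    field_simp
  have hentry : ∀ i j : Fin n, ((A i j : ℝ) : ℂ)
      = (1/(n:ℂ)) * ∑ m ∈ range n, Λ m * ω ^ (((i:ℕ) + n - (j:ℕ)) * m) := by
    intro i j
    by_cases hij : i = j
    · subst hij
      have he : (i:ℕ) + n - (i:ℕ) = n := by omega
      rw [he]
      have hsum : ∑ m ∈ range n, Λ m * ω ^ (n * m) = (2/(n:ℂ)^4) * ((n:ℂ)*((n:ℂ)^4-1)/30) := by
        rw [← diag_sum n, Finset.mul_sum]
        refine Finset.sum_congr rfl fun m _ => ?_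
        rw [pow_mul, hω1, one_pow, mul_one, hΛdef]
        ring
      rw [hsum, hAd i]
      push_cast
      field_simp
      ring
    · set z : ℝ := π * (((i : ℕ) : ℝ) - ((j : ℕ) : ℝ)) / n with hz
      set e : ℕ := (i:ℕ) + n - (j:ℕ) with hedef
      set ζ : ℂ := ω ^ e with hζdef
      have hζn : ζ ^ n = 1 := by rw [hζdef, ← pow_mul, Nat.mul_comm, pow_mul, hω1, one_pow]
      have hij' : (i:ℕ) ≠ (j:ℕ) := fun hh => hij (Fin.ext hh)
      have hi := i.isLt
      have hj := j.isLt
      have hζ1 : ζ ≠ 1 := by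
        rw [hζdef]
        intro h
        rw [hprim.pow_eq_one_iff_dvd] at h
        rcases h with ⟨c, hc⟩
        rw [hedef] at hc
        rcases c with _ | _ | c
        · omega
        · omega
        · have h5 : 2*n ≤ n*(c+1+1) := by nlinarith [Nat.zero_le (n*c)]
          omega
      have hζ0 : ζ ≠ 0 := pow_ne_zero _ hωne
      have hζm1 : ζ - 1 ≠ 0 := sub_ne_zero.mpr hζ1
      have hkey := key_sum n ζ hζn hζ1
      have hζω : ζ * ω ^ (j:ℕ) = ω ^ (i:ℕ) := by
        rw [hζdef, ← pow_add,
          show e + (j:ℕ) = (i:ℕ) + n from by rw [hedef]; omega,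
          pow_add, hω1, mul_one]
      have hE : Complex.exp (2 * (z:ℂ) * Complex.I) = ζ := by
        have h1 : Complex.exp (2*(z:ℂ)*Complex.I) * ω ^ (j:ℕ) = ω ^ (i:ℕ) := by
          rw [hωdef, ← Complex.exp_nat_mul, ← Complex.exp_nat_mul, ← Complex.exp_add]
          congr 1
          rw [hz]
          push_cast
          field_simp
          ring
        exact mul_right_cancel₀ (pow_ne_zero _ hωne) (h1.trans hζω.symm)
      have hb0 : Complex.exp ((z:ℂ)*Complex.I) ≠ 0 := Complex.exp_ne_zero _
      have hsq : Complex.exp ((z:ℂ)*Complex.I) ^ 2 = ζ := by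
        rw [sq, ← Complex.exp_add, ← hE]
        congr 1
        ring
      have hinv : Complex.exp (-(z:ℂ)*Complex.I) = (Complex.exp ((z:ℂ)*Complex.I))⁻¹ := by
        rw [← Complex.exp_neg]
        congr 1
        ring
      have h2 : 4 * ζ * (Complex.sin (z:ℂ))^2 = -(ζ-1)^2 := by
        have ht := Complex.two_sin ((z:ℂ))
        rw [hinv] at ht
        have hts : (2 * Complex.sin ((z:ℂ)))^2
            = (((Complex.exp ((z:ℂ)*Complex.I))⁻¹ - Complex.exp ((z:ℂ)*Complex.I)) * Complex.I)^2 := by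
          rw [ht]
        have hexp : 4*(Complex.sin ((z:ℂ)))^2
            = -((Complex.exp ((z:ℂ)*Complex.I))⁻¹ - Complex.exp ((z:ℂ)*Complex.I))^2 := by
          have hI := Complex.I_sq
          linear_combination hts + ((Complex.exp ((z:ℂ)*Complex.I))⁻¹ - Complex.exp ((z:ℂ)*Complex.I))^2 * hI
        calc 4*ζ*(Complex.sin ((z:ℂ)))^2 = ζ * (4*(Complex.sin ((z:ℂ)))^2) := by ring
          _ = ζ * (-((Complex.exp ((z:ℂ)*Complex.I))⁻¹ - Complex.exp ((z:ℂ)*Complex.I))^2) := by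
              rw [hexp]
          _ = -(Complex.exp ((z:ℂ)*Complex.I) * (Complex.exp ((z:ℂ)*Complex.I))⁻¹
                - Complex.exp ((z:ℂ)*Complex.I)^2)^2 := by rw [← hsq]; ring
          _ = -(1 - ζ)^2 := by rw [mul_inv_cancel₀ hb0, hsq]
          _ = -(ζ-1)^2 := by ring
      have hsinne : Complex.sin ((z:ℂ)) ≠ 0 := by
        intro h0
        rw [h0] at h2
        have h3 : (ζ-1)^2 = 0 := by linear_combination h2
        exact hζm1 (pow_eq_zero_iff (two_ne_zero)|>.mp h3)
      rw [hA i j hij, ← hz]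
      push_cast [Complex.ofReal_sin]
      have hsum2 : ∑ m ∈ range n, Λ m * ω^(e*m)
          = (2/(n:ℂ)^4) * ∑ m ∈ range n, (m:ℂ)^2*((n:ℂ)-(m:ℂ))^2 * ζ^m := by
        rw [Finset.mul_sum]
        refine Finset.sum_congr rfl fun m _ => ?_
        rw [hΛdef, pow_mul, ← hζdef]
        ring
      rw [hsum2]
      have hSig : ∑ m ∈ range n, (m:ℂ)^2*((n:ℂ)-(m:ℂ))^2 * ζ^m
          = (-24*(n:ℂ)*ζ^2 - 4*(n:ℂ)*ζ*(ζ-1)^2)/(ζ-1)^4 := by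
        field_simp
        linear_combination hkey
      rw [hSig]
      have hs2 : (Complex.sin ((z:ℂ)))^2 = -(ζ-1)^2/(4*ζ) := by
        field_simp
        linear_combination h2
      rw [show (Complex.sin ((z:ℂ)))^4 = ((Complex.sin ((z:ℂ)))^2)^2 from by ring, hs2]
      field_simp
      ring
  funext i
  simp only [Matrix.mulVec, dotProduct, Matrix.map_apply, Pi.smul_apply, smul_eq_mul]
  have horth : ∀ m ∈ range n, ∑ j : Fin n, ω^(((i:ℕ)+n-(j:ℕ))*m) * ω^((j:ℕ)*(k:ℕ))
      = if m = (k:ℕ) then (n:ℂ) * ω^((i:ℕ)*(k:ℕ)) else 0 := by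
    intro m hm
    by_cases hmk : m = (k:ℕ)
    · rw [if_pos hmk, hmk]
      have hterm : ∀ j : Fin n, ω^(((i:ℕ)+n-(j:ℕ))*(k:ℕ)) * ω^((j:ℕ)*(k:ℕ)) = ω^((i:ℕ)*(k:ℕ)) := by
        intro j
        rw [← pow_add, show ((i:ℕ)+n-(j:ℕ))*(k:ℕ) + (j:ℕ)*(k:ℕ) = ((i:ℕ)+n)*(k:ℕ) from by
          rw [← add_mul]
          congr 1
          have := j.isLt
          omega]
        rw [add_mul, pow_add, pow_mul ω n (k:ℕ), hω1, one_pow, mul_one]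
      rw [Finset.sum_congr rfl fun j _ => hterm j, Finset.sum_const, Finset.card_univ,
        Fintype.card_fin, nsmul_eq_mul]
    · rw [if_neg hmk]
      set ρ : ℂ := ω^(k:ℕ) / ω^m with hρdef
      have hρn : ρ^n = 1 := by
        rw [hρdef, div_pow, ← pow_mul, ← pow_mul, Nat.mul_comm (k:ℕ) n, Nat.mul_comm m n,
          pow_mul, pow_mul, hω1, one_pow, one_pow]
        norm_num
      have hρ1 : ρ ≠ 1 := by
        rw [hρdef]
        intro h
        rw [div_eq_one_iff_eq (pow_ne_zero _ hωne)] at h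
        exact hmk (hprim.pow_inj k.isLt (Finset.mem_range.mp hm) h).symm
      have hterm : ∀ j : Fin n, ω^(((i:ℕ)+n-(j:ℕ))*m) * ω^((j:ℕ)*(k:ℕ))
          = ω^(((i:ℕ)+n)*m) * ρ^(j:ℕ) := by
        intro j
        have hx : ρ^(j:ℕ) * ω^((j:ℕ)*m) = ω^((j:ℕ)*(k:ℕ)) := by
          rw [hρdef, div_pow, ← pow_mul, ← pow_mul, Nat.mul_comm (j:ℕ) m,
            div_mul_cancel₀ _ (pow_ne_zero _ hωne), Nat.mul_comm]
        rw [← hx, show ω^(((i:ℕ)+n-(j:ℕ))*m) * (ρ^(j:ℕ) * ω^((j:ℕ)*m))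
            = (ω^(((i:ℕ)+n-(j:ℕ))*m) * ω^((j:ℕ)*m)) * ρ^(j:ℕ) from by ring,
          ← pow_add, show ((i:ℕ)+n-(j:ℕ))*m + (j:ℕ)*m = ((i:ℕ)+n)*m from by
            rw [← add_mul]
            congr 1
            have := j.isLt
            omega]
      rw [Finset.sum_congr rfl fun j _ => hterm j, ← Finset.mul_sum]
      rw [Fin.sum_univ_eq_sum_range (fun j => ρ^j) n, geom_sum_eq hρ1, hρn, sub_self, zero_div,
        mul_zero]
  calc ∑ j : Fin n, ((A i j : ℝ):ℂ) * Complex.exp (2 * (π : ℂ) * Complex.I * ((j : ℕ) : ℂ) * ((k : ℕ) : ℂ) / (n : ℂ))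
      = ∑ j : Fin n, (1/(n:ℂ) * ∑ m ∈ range n, Λ m * ω ^ (((i:ℕ) + n - (j:ℕ)) * m)) * ω^((j:ℕ)*(k:ℕ)) := by
        exact Finset.sum_congr rfl fun j _ => by rw [hentry i j, hv j]
    _ = 1/(n:ℂ) * ∑ j : Fin n, ∑ m ∈ range n, Λ m * ω ^ (((i:ℕ) + n - (j:ℕ)) * m) * ω^((j:ℕ)*(k:ℕ)) := by
        rw [Finset.mul_sum]
        exact Finset.sum_congr rfl fun j _ => by rw [mul_assoc, Finset.sum_mul]
    _ = 1/(n:ℂ) * ∑ m ∈ range n, ∑ j : Fin n, Λ m * ω ^ (((i:ℕ) + n - (j:ℕ)) * m) * ω^((j:ℕ)*(k:ℕ)) := by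
        rw [Finset.sum_comm]
    _ = 1/(n:ℂ) * ∑ m ∈ range n, Λ m * ∑ j : Fin n, ω ^ (((i:ℕ) + n - (j:ℕ)) * m) * ω^((j:ℕ)*(k:ℕ)) := by
        congr 1
        refine Finset.sum_congr rfl fun m _ => ?_
        rw [Finset.mul_sum]
        exact Finset.sum_congr rfl fun j _ => by ring
    _ = 1/(n:ℂ) * ∑ m ∈ range n, Λ m * (if m = (k:ℕ) then (n:ℂ) * ω^((i:ℕ)*(k:ℕ)) else 0) := by
        congr 1
        exact Finset.sum_congr rfl fun m hm => by rw [horth m hm]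
    _ = 1/(n:ℂ) * (Λ (k:ℕ) * ((n:ℂ) * ω^((i:ℕ)*(k:ℕ)))) := by
        congr 1
        simp only [mul_ite, mul_zero]
        rw [Finset.sum_ite_eq' (range n) (k:ℕ) (fun m => Λ m * ((n:ℂ) * ω^((i:ℕ)*(k:ℕ)))),
          if_pos (Finset.mem_range.mpr k.isLt)]
    _ = ((2 * ((k : ℕ) : ℝ) ^ 2 * ((n : ℝ) - ((k : ℕ) : ℝ)) ^ 2 / (n : ℝ) ^ 4 : ℝ) : ℂ)
        * Complex.exp (2 * (π : ℂ) * Complex.I * ((i : ℕ) : ℂ) * ((k : ℕ) : ℂ) / (n : ℂ)) := by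
        rw [hv i, hΛdef]
        push_cast
        field_simp
end

section
/- Define H_n(θ) = −∑_{i≠j} 1/sin²((θ_i−θ_j)/2) for θ = (θ_0,…,θ_{n−1}) with distinct angles mod 2π. At the equally-spaced configuration α_i = 2πi/n + ψ (for a fixed constant ψ), one has H_n(α) = −(n³−n)/3. -/
open Real Complex Finset

noncomputable def ee (n : ℕ) (m : ℤ) : ℂ := Complex.exp (2 * π * Complex.I * m / n)

lemma ee_add (n : ℕ) (a b : ℤ) : ee n (a + b) = ee n a * ee n b := by
  rw [ee, ee, ee, ← Complex.exp_add]; congr 1; push_cast; ring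

lemma ee_zero (n : ℕ) : ee n 0 = 1 := by simp [ee]

lemma ee_pow (n : ℕ) (m : ℤ) (k : ℕ) : ee n m ^ k = ee n (m * k) := by
  rw [ee, ee, ← Complex.exp_nat_mul]; congr 1; push_cast; ring

lemma ee_eq_one_iff (n : ℕ) (hn : 0 < n) (m : ℤ) : ee n m = 1 ↔ (n : ℤ) ∣ m := by
  rw [ee, Complex.exp_eq_one_iff]
  have hn' : (n : ℂ) ≠ 0 := Nat.cast_ne_zero.2 hn.ne'
  have h2 : (2 * (π:ℂ) * Complex.I : ℂ) ≠ 0 := by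
    simp [Real.pi_ne_zero, Complex.I_ne_zero, Complex.ofReal_ne_zero]
  constructor
  · rintro ⟨k, hk⟩
    refine ⟨k, ?_⟩
    have h3 : (m : ℂ) * (2 * π * Complex.I) = ((n:ℂ) * k) * (2 * π * Complex.I) := by
      field_simp at hk
      linear_combination (2 * π * Complex.I) * hk
    have := mul_right_cancel₀ h2 h3
    exact_mod_cast this
  · rintro ⟨k, rfl⟩
    refine ⟨k, ?_⟩
    field_simp
    ring
    simp


lemma sin_link (n : ℕ) (m : ℤ) :
    (ee n m - 1) * (ee n (-m) - 1) = ((4 * Real.sin (π * m / n) ^ 2 : ℝ) : ℂ) := by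
  have key : ∀ s : ℤ, ee n s = Complex.exp ((((2 * π * s / n : ℝ)) : ℂ) * Complex.I) := by
    intro s; rw [ee]; congr 1; push_cast; ring
  have h1 : ee n m + ee n (-m) = ((2 * Real.cos (2 * π * m / n) : ℝ) : ℂ) := by
    rw [key m, key (-m), Complex.exp_mul_I, Complex.exp_mul_I]
    have e1 : ((2 * π * ((-m : ℤ) : ℝ) / n : ℝ) : ℂ) = -((2 * π * (m : ℝ) / n : ℝ) : ℂ) := by
      push_cast; ring
    rw [e1, Complex.cos_neg, Complex.sin_neg, ← Complex.ofReal_cos]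
    push_cast
    ring
  have h2 : ee n m * ee n (-m) = 1 := by rw [← ee_add]; simp [ee_zero]
  have h3 : (4 : ℝ) * Real.sin (π * m / n) ^ 2 = 2 - 2 * Real.cos (2 * π * m / n) := by
    have hc : 2 * (π * m / n) = 2 * π * m / n := by ring
    have h4 := Real.cos_sq (π * m / n)
    have hs := Real.sin_sq (π * m / n)
    rw [hc] at h4
    nlinarith [h4, hs]
  have h1' := h1
  have h3' := congrArg (Complex.ofReal) h3
  push_cast at h1' h3' ⊢
  linear_combination h2 - h1' - h3'
noncomputable def Sm (n : ℕ) (m : ℤ) : ℂ := ∑ a ∈ Finset.range n, (a : ℂ) * ee n (m * a)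

lemma poly (z : ℂ) (n : ℕ) :
    (1 - z) * ∑ j ∈ Finset.range n, (j : ℂ) * z ^ j
      = (∑ j ∈ Finset.range n, z ^ j) - 1 - ((n : ℂ) - 1) * z ^ n := by
  induction n with
  | zero => simp
  | succ k ih =>
    rw [Finset.sum_range_succ, Finset.sum_range_succ (f := fun j => z ^ j)]
    push_cast
    ring_nf
    ring_nf at ih
    linear_combination ih

lemma Sm_mul (n : ℕ) (hn : 0 < n) (m : ℤ) (h : ¬ (n:ℤ) ∣ m) :
    Sm n m * (ee n m - 1) = (n : ℂ) := by
  have hz1 : ee n m ≠ 1 := fun hc => h ((ee_eq_one_iff n hn m).1 hc)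
  have hzn : ee n m ^ n = 1 := by
    rw [ee_pow, ee_eq_one_iff n hn]; exact ⟨m, mul_comm m n⟩
  have hgeom : ∑ j ∈ Finset.range n, ee n m ^ j = 0 := by
    rw [geom_sum_eq hz1, hzn, sub_self, zero_div]
  have hS : Sm n m = ∑ j ∈ Finset.range n, (j : ℂ) * ee n m ^ j := by
    rw [Sm]; exact Finset.sum_congr rfl fun a _ => by rw [ee_pow]
  have hp := poly (ee n m) n
  rw [hgeom, hzn] at hp
  rw [hS]
  linear_combination -hp

lemma Gm (n : ℕ) (hn : 0 < n) (d : ℤ) :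
    ∑ i : Fin n, ee n (d * i) = if (n:ℤ) ∣ d then (n : ℂ) else 0 := by
  split_ifs with hd
  · rw [Finset.sum_congr rfl (fun (i : Fin n) _ => (ee_eq_one_iff n hn (d * i)).2 (hd.mul_right (i:ℤ)))]
    simp
  · have hz1 : ee n d ≠ 1 := fun hc => hd ((ee_eq_one_iff n hn d).1 hc)
    have hzn : ee n d ^ n = 1 := by
      rw [ee_pow, ee_eq_one_iff n hn]; exact ⟨d, mul_comm d n⟩
    rw [Fin.sum_univ_eq_sum_range (fun i => ee n (d * i))]
    rw [Finset.sum_congr rfl (fun i _ => (ee_pow n d i).symm)]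
    rw [geom_sum_eq hz1, hzn, sub_self, zero_div]

lemma q1 (n : ℕ) : (∑ a ∈ Finset.range n, (a : ℂ)) * 2 = (n:ℂ)^2 - n := by
  induction n with
  | zero => simp
  | succ k ih => rw [Finset.sum_range_succ]; push_cast; ring_nf; ring_nf at ih; linear_combination ih

lemma q2 (n : ℕ) : (∑ a ∈ Finset.range n, (a : ℂ)^2) * 6 = 2*(n:ℂ)^3 - 3*(n:ℂ)^2 + n := by
  induction n with
  | zero => simp
  | succ k ih => rw [Finset.sum_range_succ]; push_cast; ring_nf; ring_nf at ih; linear_combination ih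

lemma term_eq (n : ℕ) (hn : 0 < n) (m : ℤ) (h : ¬ (n:ℤ) ∣ m) :
    ((1 / Real.sin (π * m / n) ^ 2 : ℝ) : ℂ) = 4 / (n:ℂ)^2 * (Sm n m * Sm n (-m)) := by
  have h' : ¬ (n:ℤ) ∣ (-m) := fun hc => h ((dvd_neg).1 hc)
  have hA := Sm_mul n hn m h
  have hB := Sm_mul n hn (-m) h'
  have hsin := sin_link n m
  have hz1 : ee n m ≠ 1 := fun hc => h ((ee_eq_one_iff n hn m).1 hc)
  have hw1 : ee n (-m) ≠ 1 := fun hc => h' ((ee_eq_one_iff n hn (-m)).1 hc)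
  have hs0 : ((4 * Real.sin (π * m / n) ^ 2 : ℝ) : ℂ) ≠ 0 := by
    rw [← hsin]
    exact mul_ne_zero (sub_ne_zero.2 hz1) (sub_ne_zero.2 hw1)
  have hrs : Real.sin (π * m / n) ≠ 0 := by
    intro h0
    apply hs0
    rw [h0]
    norm_num
  have hn' : (n : ℂ) ≠ 0 := Nat.cast_ne_zero.2 hn.ne'
  have hrs' : (Complex.sin ((π:ℂ) * m / n)) ≠ 0 := by
    have : ((Real.sin (π * m / n) : ℝ) : ℂ) ≠ 0 := Complex.ofReal_ne_zero.2 hrs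
    push_cast at this
    exact this
  push_cast at hsin ⊢
  rw [div_mul_eq_mul_div, div_eq_div_iff (pow_ne_zero 2 hrs') (pow_ne_zero 2 hn')]
  linear_combination Sm n m * Sm n (-m) * hsin - (Sm n (-m) * (ee n (-m) - 1)) * hA - (n:ℂ) * hB

lemma pair_sum (n : ℕ) (hn : 0 < n) (d : ℤ) :
    ∑ i : Fin n, ∑ j ∈ Finset.univ.erase i, ee n (((i:ℤ) - j) * d)
      = (if (n:ℤ) ∣ d then (n:ℂ)^2 else 0) - n := by
  have h1 : ∀ i : Fin n, ∑ j ∈ Finset.univ.erase i, ee n (((i:ℤ) - j) * d)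
      = (∑ j : Fin n, ee n (((i:ℤ) - j) * d)) - 1 := by
    intro i
    rw [Finset.sum_erase_eq_sub (Finset.mem_univ i)]
    congr 1
    rw [sub_self, zero_mul, ee_zero]
  rw [Finset.sum_congr rfl (fun i _ => h1 i), Finset.sum_sub_distrib]
  have h2 : ∀ (i j : Fin n), ee n (((i:ℤ) - j) * d) = ee n (d * i) * ee n ((-d) * j) := by
    intro i j
    rw [← ee_add]
    congr 1
    ring
  have h3 : ∑ i : Fin n, ∑ j : Fin n, ee n (((i:ℤ) - j) * d)
      = (∑ i : Fin n, ee n (d * i)) * (∑ j : Fin n, ee n ((-d) * j)) := by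
    rw [Finset.sum_mul_sum]
    exact Finset.sum_congr rfl fun i _ => Finset.sum_congr rfl fun j _ => h2 i j
  rw [h3, Gm n hn d, Gm n hn (-d)]
  simp only [dvd_neg]
  split_ifs with hd
  · simp [sq]
  · simp

lemma dvd_iff_eq (n : ℕ) (a b : ℕ) (ha : a < n) (hb : b < n) :
    (n:ℤ) ∣ ((a:ℤ) - b) ↔ a = b := by
  constructor
  · intro h
    have habs : |(a:ℤ) - b| < n := by
      rw [abs_lt]
      constructor <;> omega
    have := Int.eq_zero_of_abs_lt_dvd h habs
    omega
  · rintro rfl; simp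

lemma combinat (n : ℕ) (hn : 0 < n) :
    ∑ i : Fin n, ∑ j ∈ Finset.univ.erase i, Sm n ((i:ℤ) - j) * Sm n (-((i:ℤ) - j))
      = (n:ℂ)^2 * (∑ a ∈ Finset.range n, (a:ℂ)^2)
        - n * (∑ a ∈ Finset.range n, (a:ℂ))^2 := by
  have expand : ∀ u : ℤ, Sm n u * Sm n (-u)
      = ∑ a ∈ Finset.range n, ∑ b ∈ Finset.range n,
          ((a:ℂ) * b) * ee n (u * ((a:ℤ) - b)) := by
    intro u
    rw [Sm, Sm, Finset.sum_mul_sum]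
    refine Finset.sum_congr rfl fun a _ => Finset.sum_congr rfl fun b _ => ?_
    rw [show u * ((a:ℤ) - b) = u * a + (-u) * b by ring, ee_add]
    ring
  calc ∑ i : Fin n, ∑ j ∈ Finset.univ.erase i, Sm n ((i:ℤ) - j) * Sm n (-((i:ℤ) - j))
      = ∑ i : Fin n, ∑ j ∈ Finset.univ.erase i, ∑ a ∈ Finset.range n, ∑ b ∈ Finset.range n,
          ((a:ℂ) * b) * ee n (((i:ℤ) - j) * ((a:ℤ) - b)) :=
        Finset.sum_congr rfl fun i _ => Finset.sum_congr rfl fun j _ => expand _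
    _ = ∑ i : Fin n, ∑ a ∈ Finset.range n, ∑ b ∈ Finset.range n, ∑ j ∈ Finset.univ.erase i,
          ((a:ℂ) * b) * ee n (((i:ℤ) - j) * ((a:ℤ) - b)) := by
        refine Finset.sum_congr rfl fun i _ => ?_
        rw [Finset.sum_comm]
        exact Finset.sum_congr rfl fun a _ => Finset.sum_comm
    _ = ∑ a ∈ Finset.range n, ∑ b ∈ Finset.range n, ∑ i : Fin n, ∑ j ∈ Finset.univ.erase i,
          ((a:ℂ) * b) * ee n (((i:ℤ) - j) * ((a:ℤ) - b)) := by
        rw [Finset.sum_comm]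
        exact Finset.sum_congr rfl fun a _ => Finset.sum_comm
    _ = ∑ a ∈ Finset.range n, ∑ b ∈ Finset.range n,
          ((a:ℂ) * b) * ((if (n:ℤ) ∣ ((a:ℤ) - b) then (n:ℂ)^2 else 0) - n) := by
        refine Finset.sum_congr rfl fun a _ => Finset.sum_congr rfl fun b _ => ?_
        rw [← pair_sum n hn ((a:ℤ) - b), Finset.mul_sum]
        refine Finset.sum_congr rfl fun i _ => ?_
        rw [Finset.mul_sum]
    _ = ∑ a ∈ Finset.range n, ∑ b ∈ Finset.range n,
          ((a:ℂ) * b) * ((if a = b then (n:ℂ)^2 else 0) - n) := by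
        refine Finset.sum_congr rfl fun a ha => Finset.sum_congr rfl fun b hb => ?_
        rw [if_congr (dvd_iff_eq n a b (Finset.mem_range.1 ha) (Finset.mem_range.1 hb)) rfl rfl]
    _ = (n:ℂ)^2 * (∑ a ∈ Finset.range n, (a:ℂ)^2)
        - n * (∑ a ∈ Finset.range n, (a:ℂ))^2 := by
        simp only [mul_sub, Finset.sum_sub_distrib, mul_ite, mul_zero]
        congr 1
        · rw [Finset.mul_sum]
          refine Finset.sum_congr rfl fun a ha => ?_
          rw [Finset.sum_ite_eq (Finset.range n) a (fun b => (a:ℂ) * b * (n:ℂ)^2),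
            if_pos ha]
          ring
        · rw [sq, Finset.sum_mul_sum, Finset.mul_sum]
          refine Finset.sum_congr rfl fun a _ => ?_
          rw [Finset.mul_sum]
          refine Finset.sum_congr rfl fun b _ => ?_
          ring

theorem ground_state_energy (n : ℕ) (hn : 2 ≤ n) (ψ : ℝ) :
    -∑ i : Fin n, ∑ j ∈ Finset.univ.erase i,
        (1 : ℝ) / Real.sin (((2 * π * ((i : ℕ) : ℝ) / n + ψ) - (2 * π * ((j : ℕ) : ℝ) / n + ψ)) / 2) ^ 2
      = -((n : ℝ) ^ 3 - n) / 3 := by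
  have hn0 : 0 < n := lt_of_lt_of_le two_pos hn
  have hnC : (n : ℂ) ≠ 0 := Nat.cast_ne_zero.2 hn0.ne'
  have step1 : ∑ i : Fin n, ∑ j ∈ Finset.univ.erase i,
        (1 : ℝ) / Real.sin (((2 * π * ((i : ℕ) : ℝ) / n + ψ) - (2 * π * ((j : ℕ) : ℝ) / n + ψ)) / 2) ^ 2
      = ∑ i : Fin n, ∑ j ∈ Finset.univ.erase i,
        (1 : ℝ) / Real.sin (π * ((((i:ℤ) - (j:ℤ)) : ℤ) : ℝ) / n) ^ 2 := by
    refine Finset.sum_congr rfl fun i _ => Finset.sum_congr rfl fun j _ => ?_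
    congr 3
    push_cast
    ring
  rw [step1]
  have step2 : ((∑ i : Fin n, ∑ j ∈ Finset.univ.erase i,
        (1 : ℝ) / Real.sin (π * ((((i:ℤ) - (j:ℤ)) : ℤ) : ℝ) / n) ^ 2 : ℝ) : ℂ)
      = ((((n:ℝ)^3 - n) / 3 : ℝ) : ℂ) := by
    rw [Complex.ofReal_sum]
    calc ∑ i : Fin n, ((∑ j ∈ Finset.univ.erase i,
            (1 : ℝ) / Real.sin (π * ((((i:ℤ) - (j:ℤ)) : ℤ) : ℝ) / n) ^ 2 : ℝ) : ℂ)
        = ∑ i : Fin n, ∑ j ∈ Finset.univ.erase i,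
            (((1 : ℝ) / Real.sin (π * ((((i:ℤ) - (j:ℤ)) : ℤ) : ℝ) / n) ^ 2 : ℝ) : ℂ) := by
          exact Finset.sum_congr rfl fun i _ => Complex.ofReal_sum _ _
      _ = ∑ i : Fin n, ∑ j ∈ Finset.univ.erase i,
            4 / (n:ℂ)^2 * (Sm n ((i:ℤ) - j) * Sm n (-((i:ℤ) - j))) := by
          refine Finset.sum_congr rfl fun i _ => Finset.sum_congr rfl fun j hj => ?_
          have hij : (i:ℕ) ≠ (j:ℕ) := by
            have := Finset.ne_of_mem_erase hj
            exact fun hc => this (Fin.ext hc.symm)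
          have hndvd : ¬ (n:ℤ) ∣ ((i:ℤ) - j) := by
            rw [dvd_iff_eq n i j i.isLt j.isLt]
            exact hij
          exact term_eq n hn0 ((i:ℤ) - j) hndvd
      _ = 4 / (n:ℂ)^2 * ∑ i : Fin n, ∑ j ∈ Finset.univ.erase i,
            Sm n ((i:ℤ) - j) * Sm n (-((i:ℤ) - j)) := by
          rw [Finset.mul_sum]
          exact Finset.sum_congr rfl fun i _ => (Finset.mul_sum _ _ _).symm
      _ = ((((n:ℝ)^3 - n) / 3 : ℝ) : ℂ) := by
          rw [combinat n hn0]
          have hq1 := q1 n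
          have hq2 := q2 n
          push_cast
          field_simp
          linear_combination (-6*(∑ a ∈ Finset.range n, (a:ℂ)) - 3*((n:ℂ)^2-(n:ℂ))) * hq1 + (2*(n:ℂ)) * hq2
  have := Complex.ofReal_injective step2
  rw [this]
  ring
end

section
/- Let n ≥ 2, x ∈ ℝⁿ, α_i = 2πi/n + ψ, and H(θ) = −∑_{i≠j} 1/sin²((θ_i−θ_j)/2). Assume all angles α_i + τ(x_i)/n² remain distinct mod 2π for all τ ∈ [0,1]. Then H(α) − H(α + x/n²) = ∑_{i≠j} ((x_i−x_j)²/n⁴) ∫₀¹ (1−τ)·[½ + cos²(π(i−j)/n + τ(x_i−x_j)/(2n²))] / sin⁴(π(i−j)/n + τ(x_i−x_j)/(2n²)) dτ, and in particular H(α) ≥ H(α + x/n²), so the equally spaced configuration maximizes H. -/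
open Real

-- derivative of 1/sin(a+t b)^2
lemma deriv1 (a b τ : ℝ) (h : sin (a + τ * b) ≠ 0) :
    HasDerivAt (fun t : ℝ => 1 / sin (a + t * b) ^ 2)
      (-(2 * b) * cos (a + τ * b) / sin (a + τ * b) ^ 3) τ := by
  have hu : HasDerivAt (fun t : ℝ => a + t * b) b τ := by
    simpa using ((hasDerivAt_id τ).mul_const b).const_add a
  have hs : HasDerivAt (fun t : ℝ => sin (a + t * b)) (cos (a + τ * b) * b) τ :=
    hu.sin
  have hs2 := hs.pow 2
  have H2 := hs2.inv (pow_ne_zero 2 h)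
  simp only [one_div]
  refine H2.congr_deriv ?_
  simp only [Pi.pow_apply]
  field_simp
  ring

lemma deriv2 (a b τ : ℝ) (h : sin (a + τ * b) ≠ 0) :
    HasDerivAt (fun t : ℝ => -(2 * b) * cos (a + t * b) / sin (a + t * b) ^ 3)
      (4 * b ^ 2 * (1 / 2 + cos (a + τ * b) ^ 2) / sin (a + τ * b) ^ 4) τ := by
  have hu : HasDerivAt (fun t : ℝ => a + t * b) b τ := by
    simpa using ((hasDerivAt_id τ).mul_const b).const_add a
  have hs : HasDerivAt (fun t : ℝ => sin (a + t * b)) (cos (a + τ * b) * b) τ :=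
    hu.sin
  have hc : HasDerivAt (fun t : ℝ => cos (a + t * b)) (-sin (a + τ * b) * b) τ :=
    hu.cos
  have hnum : HasDerivAt (fun t : ℝ => -(2 * b) * cos (a + t * b))
      (-(2 * b) * (-sin (a + τ * b) * b)) τ := hc.const_mul _
  have hden := hs.pow 3
  have H := hnum.div hden (pow_ne_zero 3 h)
  refine H.congr_deriv ?_
  have hp : sin (a + τ * b) ^ 2 = 1 - cos (a + τ * b) ^ 2 := Real.sin_sq (a + τ * b)
  simp only [Pi.pow_apply]
  generalize sin (a + τ * b) = S at h hp ⊢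
  generalize cos (a + τ * b) = C at hp ⊢
  rw [div_eq_div_iff (pow_ne_zero 2 (pow_ne_zero 3 h)) (pow_ne_zero 4 h)]
  push_cast
  linear_combination (2*b^2*S^6) * hp
lemma pair_taylor (a b : ℝ) (h : ∀ τ ∈ Set.Icc (0:ℝ) 1, sin (a + τ * b) ≠ 0) :
    1 / sin (a + b) ^ 2 - 1 / sin a ^ 2
      = -(2 * b) * cos a / sin a ^ 3
        + 4 * b ^ 2 * ∫ τ in (0:ℝ)..1, (1 - τ) * (1 / 2 + cos (a + τ * b) ^ 2) / sin (a + τ * b) ^ 4 := by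
  have hIcc : Set.uIcc (0:ℝ) 1 = Set.Icc 0 1 := Set.uIcc_of_le zero_le_one
  -- the function F and its derivative
  have hF : ∀ τ ∈ Set.uIcc (0:ℝ) 1,
      HasDerivAt (fun t : ℝ =>
        (1 - t) * (-(2 * b) * cos (a + t * b) / sin (a + t * b) ^ 3) + 1 / sin (a + t * b) ^ 2)
        ((1 - τ) * (4 * b ^ 2 * (1 / 2 + cos (a + τ * b) ^ 2) / sin (a + τ * b) ^ 4)) τ := by
    intro τ hτ
    rw [hIcc] at hτ
    have hs := h τ hτ
    have h1 : HasDerivAt (fun t : ℝ => 1 - t) (-1) τ := by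
      simpa using (hasDerivAt_id τ).const_sub 1
    have := (h1.mul (deriv2 a b τ hs)).add (deriv1 a b τ hs)
    refine this.congr_deriv ?_
    ring
  -- continuity of the integrand
  have hcont : ContinuousOn (fun τ : ℝ =>
      (1 - τ) * (4 * b ^ 2 * (1 / 2 + cos (a + τ * b) ^ 2) / sin (a + τ * b) ^ 4))
      (Set.uIcc (0:ℝ) 1) := by
    rw [hIcc]
    apply ContinuousOn.mul (by fun_prop)
    apply ContinuousOn.div (by fun_prop) (by fun_prop)
    intro τ hτ
    exact pow_ne_zero 4 (h τ hτ)
  have hint := intervalIntegral.integral_eq_sub_of_hasDerivAt hF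
    (hcont.intervalIntegrable)
  have hval : ∫ τ in (0:ℝ)..1,
      (1 - τ) * (4 * b ^ 2 * (1 / 2 + cos (a + τ * b) ^ 2) / sin (a + τ * b) ^ 4)
      = 1 / sin (a + b) ^ 2 - (-(2 * b) * cos a / sin a ^ 3 + 1 / sin a ^ 2) := by
    rw [hint]; norm_num
  have hpull : ∫ τ in (0:ℝ)..1,
      (1 - τ) * (4 * b ^ 2 * (1 / 2 + cos (a + τ * b) ^ 2) / sin (a + τ * b) ^ 4)
      = 4 * b ^ 2 * ∫ τ in (0:ℝ)..1, (1 - τ) * (1 / 2 + cos (a + τ * b) ^ 2) / sin (a + τ * b) ^ 4 := by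
    rw [← intervalIntegral.integral_const_mul]
    apply intervalIntegral.integral_congr
    intro τ _
    ring
  rw [← hpull, hval]
  ring

noncomputable def phi (n : ℕ) (t : ℝ) : ℝ := cos (π * t / n) / sin (π * t / n) ^ 3

lemma phi_eq (n : ℕ) (t : ℝ) :
    phi n t = (sin (2 * (π * t / n)) / 2) / (((1 - cos (2 * (π * t / n))) / 2) ^ 2) := by
  set s := π * t / n with hs
  have h2 : 1 - cos (2 * s) = 2 * sin s ^ 2 := by
    rw [Real.cos_two_mul]
    have := Real.sin_sq_add_cos_sq s
    linarith
  rw [Real.sin_two_mul, h2, phi]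
  rcases eq_or_ne (sin s) 0 with h | h
  · rw [← hs]; simp [h]
  · rw [← hs]; field_simp

lemma phi_period (n : ℕ) (hn : (n:ℝ) ≠ 0) (t : ℝ) (k : ℤ) : phi n (t + k * n) = phi n t := by
  rw [phi_eq, phi_eq]
  have h : 2 * (π * (t + k * n) / n) = 2 * (π * t / n) + k * (2 * π) := by
    field_simp
  rw [h, Real.sin_add_int_mul_two_pi, Real.cos_add_int_mul_two_pi]

lemma phi_neg (n : ℕ) (t : ℝ) : phi n (-t) = -phi n t := by
  rw [phi, phi]
  have h : π * (-t) / n = -(π * t / n) := by ring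
  rw [h, Real.cos_neg, Real.sin_neg]
  ring

lemma key_sum_s8 (n : ℕ) (hn : 2 ≤ n) (i : Fin n) :
    ∑ j ∈ Finset.univ.erase i, phi n (((i:ℕ):ℝ) - ((j:ℕ):ℝ)) = 0 := by
  haveI : NeZero n := ⟨by omega⟩
  have hn0 : (n:ℝ) ≠ 0 := Nat.cast_ne_zero.mpr (by omega)
  have hneg : ∀ j : Fin n,
      phi n (((i:ℕ):ℝ) - (((i + (i - j) : Fin n):ℕ):ℝ)) = -phi n (((i:ℕ):ℝ) - ((j:ℕ):ℝ)) := by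
    intro j
    have hjlt := j.isLt
    obtain ⟨s, hs⟩ : ∃ s, (j:ℕ) + s = n := ⟨n - (j:ℕ), by omega⟩
    have hval : ((i + (i - j) : Fin n) : ℕ) = ((i:ℕ) + (s + (i:ℕ)) % n) % n := by
      simp only [Fin.add_def, Fin.sub_def]
      have : n - (j:ℕ) = s := by omega
      rw [this]
    obtain ⟨q1, hq1⟩ : ∃ q, s + (i:ℕ) = n * q + (s + (i:ℕ)) % n :=
      ⟨_, (Nat.div_add_mod _ n).symm⟩
    obtain ⟨q2, hq2⟩ : ∃ q, (i:ℕ) + (s + (i:ℕ)) % n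
        = n * q + ((i:ℕ) + (s + (i:ℕ)) % n) % n :=
      ⟨_, (Nat.div_add_mod _ n).symm⟩
    set k : ℤ := (q1:ℤ) + q2 - 1 with hk
    have hq1R := congrArg (Nat.cast : ℕ → ℝ) hq1
    have hq2R := congrArg (Nat.cast : ℕ → ℝ) hq2
    have hsR := congrArg (Nat.cast : ℕ → ℝ) hs
    push_cast at hq1R hq2R hsR
    have hkeyR : (((i:ℕ):ℝ) - (((i + (i - j) : Fin n):ℕ):ℝ))
        = -(((i:ℕ):ℝ) - ((j:ℕ):ℝ)) + (k:ℝ) * n := by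
      rw [hval, hk]
      push_cast
      linear_combination hq1R + hq2R - hsR
    rw [hkeyR, phi_period n hn0 _ k, phi_neg]
  apply Finset.sum_involution (fun j _ => i + (i - j))
  · intro j hj
    rw [hneg]; ring
  · intro j hj hfj hgj
    apply hfj
    have h1 := hneg j
    rw [hgj] at h1
    linarith
  · intro j hj
    simp only [Finset.mem_erase, Finset.mem_univ, and_true, ne_eq]
    intro hgi
    have h0 : i - j = 0 := by
      have := hgi.trans (add_zero i).symm
      exact add_left_cancel this
    exact (Finset.mem_erase.mp hj).1 (sub_eq_zero.mp h0).symm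
  · intro j hj
    abel

lemma key_sum' (n : ℕ) (hn : 2 ≤ n) (i : Fin n) :
    ∑ j ∈ Finset.univ.erase i, phi n (((j:ℕ):ℝ) - ((i:ℕ):ℝ)) = 0 := by
  have h : ∀ j : Fin n, phi n (((j:ℕ):ℝ) - ((i:ℕ):ℝ)) = -phi n (((i:ℕ):ℝ) - ((j:ℕ):ℝ)) := by
    intro j
    rw [← neg_sub, phi_neg]
  simp only [h]
  rw [Finset.sum_neg_distrib, key_sum_s8 n hn i, neg_zero]

theorem taylor_deficit_formula (n : ℕ) (hn : 2 ≤ n) (ψ : ℝ) (x : Fin n → ℝ)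
    (H : (Fin n → ℝ) → ℝ)
    (hH : ∀ θ : Fin n → ℝ,
      H θ = -∑ i : Fin n, ∑ j ∈ Finset.univ.erase i, 1 / Real.sin ((θ i - θ j) / 2) ^ 2)
    (α : Fin n → ℝ) (hα : ∀ i : Fin n, α i = 2 * π * ((i : ℕ) : ℝ) / n + ψ)
    (hdist : ∀ τ ∈ Set.Icc (0 : ℝ) 1, ∀ i j : Fin n, i ≠ j →
      Real.sin (((α i + τ * x i / (n : ℝ) ^ 2) - (α j + τ * x j / (n : ℝ) ^ 2)) / 2) ≠ 0) :
    H α - H (fun i => α i + x i / (n : ℝ) ^ 2)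
      = ∑ i : Fin n, ∑ j ∈ Finset.univ.erase i,
          ((x i - x j) ^ 2 / (n : ℝ) ^ 4) *
            ∫ τ in (0 : ℝ)..1, (1 - τ) *
              (1 / 2 + Real.cos (π * (((i : ℕ) : ℝ) - ((j : ℕ) : ℝ)) / n
                  + τ * (x i - x j) / (2 * (n : ℝ) ^ 2)) ^ 2)
              / Real.sin (π * (((i : ℕ) : ℝ) - ((j : ℕ) : ℝ)) / n
                  + τ * (x i - x j) / (2 * (n : ℝ) ^ 2)) ^ 4
    ∧ H (fun i => α i + x i / (n : ℝ) ^ 2) ≤ H α := by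
  have hn0 : (n:ℝ) ≠ 0 := Nat.cast_ne_zero.mpr (by omega)
  have hdiff : ∀ (τ : ℝ) (i j : Fin n),
      ((α i + τ * x i / (n:ℝ)^2) - (α j + τ * x j / (n:ℝ)^2)) / 2
        = π * (((i:ℕ):ℝ) - ((j:ℕ):ℝ)) / n + τ * ((x i - x j) / (2 * (n:ℝ)^2)) := by
    intro τ i j
    rw [hα i, hα j]
    field_simp
    ring
  have hsin : ∀ i j : Fin n, i ≠ j → ∀ τ ∈ Set.Icc (0:ℝ) 1,
      sin (π * (((i:ℕ):ℝ) - ((j:ℕ):ℝ)) / n + τ * ((x i - x j) / (2 * (n:ℝ)^2))) ≠ 0 := by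
    intro i j hij τ hτ
    have := hdist τ hτ i j hij
    rwa [hdiff τ i j] at this
  have pair : ∀ i j : Fin n, i ≠ j →
      1 / sin (π * (((i:ℕ):ℝ) - ((j:ℕ):ℝ)) / n + (x i - x j) / (2 * (n:ℝ)^2)) ^ 2
        - 1 / sin (π * (((i:ℕ):ℝ) - ((j:ℕ):ℝ)) / n) ^ 2
      = (-(2 * ((x i - x j) / (2 * (n:ℝ)^2))) * cos (π * (((i:ℕ):ℝ) - ((j:ℕ):ℝ)) / n)
            / sin (π * (((i:ℕ):ℝ) - ((j:ℕ):ℝ)) / n) ^ 3)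
        + ((x i - x j) ^ 2 / (n : ℝ) ^ 4) *
            ∫ τ in (0 : ℝ)..1, (1 - τ) *
              (1 / 2 + Real.cos (π * (((i : ℕ) : ℝ) - ((j : ℕ) : ℝ)) / n
                  + τ * (x i - x j) / (2 * (n : ℝ) ^ 2)) ^ 2)
              / Real.sin (π * (((i : ℕ) : ℝ) - ((j : ℕ) : ℝ)) / n
                  + τ * (x i - x j) / (2 * (n : ℝ) ^ 2)) ^ 4 := by
    intro i j hij
    rw [pair_taylor (π * (((i:ℕ):ℝ) - ((j:ℕ):ℝ)) / n) ((x i - x j) / (2 * (n:ℝ)^2))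
      (hsin i j hij)]
    congr 1
    congr 1
    · field_simp; ring
    · apply intervalIntegral.integral_congr
      intro τ _
      have harg : π * (((i:ℕ):ℝ) - ((j:ℕ):ℝ)) / n + τ * (x i - x j) / (2 * (n:ℝ)^2)
          = π * (((i:ℕ):ℝ) - ((j:ℕ):ℝ)) / n + τ * ((x i - x j) / (2 * (n:ℝ)^2)) := by
        ring
      simp only [← harg]
  -- first-order terms sum to zero
  have FOzero : ∑ i : Fin n, ∑ j ∈ Finset.univ.erase i,
      (-(2 * ((x i - x j) / (2 * (n:ℝ)^2))) * cos (π * (((i:ℕ):ℝ) - ((j:ℕ):ℝ)) / n)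
        / sin (π * (((i:ℕ):ℝ) - ((j:ℕ):ℝ)) / n) ^ 3) = 0 := by
    have hterm : ∀ i j : Fin n,
        (-(2 * ((x i - x j) / (2 * (n:ℝ)^2))) * cos (π * (((i:ℕ):ℝ) - ((j:ℕ):ℝ)) / n)
          / sin (π * (((i:ℕ):ℝ) - ((j:ℕ):ℝ)) / n) ^ 3)
        = (x j / (n:ℝ)^2) * phi n (((i:ℕ):ℝ) - ((j:ℕ):ℝ))
          - (x i / (n:ℝ)^2) * phi n (((i:ℕ):ℝ) - ((j:ℕ):ℝ)) := by
      intro i j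
      simp only [phi]
      ring
    simp only [hterm]
    simp only [Finset.sum_sub_distrib]
    have hv : ∑ i : Fin n, ∑ j ∈ Finset.univ.erase i,
        (x i / (n:ℝ)^2) * phi n (((i:ℕ):ℝ) - ((j:ℕ):ℝ)) = 0 := by
      apply Finset.sum_eq_zero
      intro i _
      rw [← Finset.mul_sum, key_sum_s8 n hn i, mul_zero]
    have hu : ∑ i : Fin n, ∑ j ∈ Finset.univ.erase i,
        (x j / (n:ℝ)^2) * phi n (((i:ℕ):ℝ) - ((j:ℕ):ℝ)) = 0 := by
      rw [Finset.sum_comm' (t' := Finset.univ) (s' := fun j => Finset.univ.erase j)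
        (by intro a b; simp [Finset.mem_erase]; tauto)]
      apply Finset.sum_eq_zero
      intro j _
      rw [← Finset.mul_sum, key_sum' n hn j, mul_zero]
    rw [hu, hv, sub_zero]
  -- main identity
  have hmain : H α - H (fun i => α i + x i / (n : ℝ) ^ 2)
      = ∑ i : Fin n, ∑ j ∈ Finset.univ.erase i,
          ((x i - x j) ^ 2 / (n : ℝ) ^ 4) *
            ∫ τ in (0 : ℝ)..1, (1 - τ) *
              (1 / 2 + Real.cos (π * (((i : ℕ) : ℝ) - ((j : ℕ) : ℝ)) / n
                  + τ * (x i - x j) / (2 * (n : ℝ) ^ 2)) ^ 2)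
              / Real.sin (π * (((i : ℕ) : ℝ) - ((j : ℕ) : ℝ)) / n
                  + τ * (x i - x j) / (2 * (n : ℝ) ^ 2)) ^ 4 := by
    rw [hH α, hH (fun i => α i + x i / (n:ℝ)^2)]
    have e0 : ∀ i j : Fin n, (α i - α j) / 2 = π * (((i:ℕ):ℝ) - ((j:ℕ):ℝ)) / n := by
      intro i j
      rw [hα i, hα j]
      field_simp
      ring
    have e1 : ∀ i j : Fin n, ((α i + x i / (n:ℝ)^2) - (α j + x j / (n:ℝ)^2)) / 2
        = π * (((i:ℕ):ℝ) - ((j:ℕ):ℝ)) / n + (x i - x j) / (2 * (n:ℝ)^2) := by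
      intro i j
      rw [hα i, hα j]
      field_simp
      ring
    simp only [e0, e1]
    rw [neg_sub_neg]
    have hsplit : (∑ i : Fin n, ∑ j ∈ Finset.univ.erase i,
          1 / sin (π * (((i:ℕ):ℝ) - ((j:ℕ):ℝ)) / n + (x i - x j) / (2 * (n:ℝ)^2)) ^ 2)
        - (∑ i : Fin n, ∑ j ∈ Finset.univ.erase i,
          1 / sin (π * (((i:ℕ):ℝ) - ((j:ℕ):ℝ)) / n) ^ 2)
        = ∑ i : Fin n, ∑ j ∈ Finset.univ.erase i,
          (1 / sin (π * (((i:ℕ):ℝ) - ((j:ℕ):ℝ)) / n + (x i - x j) / (2 * (n:ℝ)^2)) ^ 2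
            - 1 / sin (π * (((i:ℕ):ℝ) - ((j:ℕ):ℝ)) / n) ^ 2) := by
      simp only [Finset.sum_sub_distrib]
    rw [hsplit]
    rw [Finset.sum_congr rfl (fun i _ => Finset.sum_congr rfl
      (fun j hj => pair i j (Ne.symm (Finset.mem_erase.mp hj).1)))]
    simp only [Finset.sum_add_distrib]
    rw [FOzero, zero_add]
  refine ⟨hmain, ?_⟩
  have hnonneg : 0 ≤ H α - H (fun i => α i + x i / (n : ℝ) ^ 2) := by
    rw [hmain]
    apply Finset.sum_nonneg
    intro i _
    apply Finset.sum_nonneg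
    intro j _
    apply mul_nonneg (by positivity)
    apply intervalIntegral.integral_nonneg zero_le_one
    intro u hu
    apply div_nonneg
    · apply mul_nonneg
      · linarith [hu.2]
      · positivity
    · positivity
  linarith
end
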